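/- arXiv:0705.0038 — 3 statements merged into one kernel-verified Lean document; each statement's English description precedes it below -/
import Mathlib

section
/- Let P be a prime graph and k a positive integer. Then the automorphism group of the k-fold box product P^{□k} = P □ P □ ⋯ □ P (k factors) is isomorphic, as a group, to the wreath product Aut(P) ≀ S_k, i.e., to the semidirect product (Fin k → Aut(P)) ⋊ S_k where the symmetric group S_k = Perm(Fin k) acts on the k-fold direct power of Aut(P) by permuting coordinates. -/
open SimpleGraph

/-- The box (Cartesian) product of a finite family of simple graphs. -/
def boxProdFamily {k : ℕ} {W : Fin k → Type} (P : ∀ i, SimpleGraph (W i)) :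
    SimpleGraph (∀ i, W i) where
  Adj u v := ∃ j, (P j).Adj (u j) (v j) ∧ ∀ i, i ≠ j → u i = v i
  symm := ⟨fun _ _ ⟨j, hadj, h⟩ => ⟨j, hadj.symm, fun i hi => (h i hi).symm⟩⟩
  loopless := ⟨fun _ ⟨j, hadj, _⟩ => (P j).loopless.irrefl _ hadj⟩

/-- The `k`-fold box product `P □ P □ ⋯ □ P` of a simple graph `P`. -/
def boxProdPow {V : Type} (P : SimpleGraph V) (k : ℕ) : SimpleGraph (Fin k → V) :=
  boxProdFamily fun _ : Fin k => P

/-- A finite simple graph is prime with respect to the box product. -/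
def SimpleGraph.IsPrime {V : Type} [Fintype V] (G : SimpleGraph V) : Prop :=
  G.Connected ∧ 2 ≤ Fintype.card V ∧
    ∀ (V₁ V₂ : Type) [Fintype V₁] [Fintype V₂]
      (H₁ : SimpleGraph V₁) (H₂ : SimpleGraph V₂),
      Nonempty (G ≃g H₁.boxProd H₂) →
      Fintype.card V₁ = 1 ∨ Fintype.card V₂ = 1

/-- The group of automorphisms of a simple graph, under composition. -/
instance SimpleGraph.autGroup {V : Type*} (G : SimpleGraph V) : Group (G ≃g G) where
  mul f g := g.trans f
  one := Iso.refl
  inv := Iso.symm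
  mul_assoc _ _ _ := rfl
  one_mul f := RelIso.ext fun _ => rfl
  mul_one f := RelIso.ext fun _ => rfl
  inv_mul_cancel f := RelIso.ext fun x => f.toEquiv.symm_apply_apply x

/-- The action of the symmetric group `Perm (Fin k)` on the `k`-fold direct power
of a group `G`, permuting the coordinates. -/
def permCoordAction (k : ℕ) (G : Type*) [Group G] :
    Equiv.Perm (Fin k) →* MulAut (Fin k → G) where
  toFun σ :=
    { toFun := fun f => f ∘ σ.symm
      invFun := fun f => f ∘ σ
      left_inv := fun f => by ext i; simp
      right_inv := fun f => by ext i; simp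
      map_mul' := fun f g => rfl }
  map_one' := by ext f i; rfl
  map_mul' := fun σ₁ σ₂ => by ext f i; rfl

namespace SabAux
set_option linter.unusedSectionVars false

open Function Finset

variable {V : Type} [Fintype V] {P : SimpleGraph V} {k : ℕ}

lemma pow_adj {u v : Fin k → V} :
    (boxProdPow P k).Adj u v ↔ ∃ j, P.Adj (u j) (v j) ∧ ∀ i, i ≠ j → u i = v i := Iff.rfl

/-- mergeOn: take values of `y` on `s`, of `x` elsewhere -/
def mergeOn (s : Finset (Fin k)) (y x : Fin k → V) : Fin k → V :=
  fun i => if i ∈ s then y i else x i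

/-- Lift a walk in `P` to a walk in the power moving only coordinate `j`. -/
def liftWalk (j : Fin k) (a : Fin k → V) : ∀ {u v : V}, P.Walk u v →
    (boxProdPow P k).Walk (Function.update a j u) (Function.update a j v)
  | _, _, .nil => SimpleGraph.Walk.nil
  | _, _, .cons h w => SimpleGraph.Walk.cons
      ⟨j, by simpa using h, fun i hi => by simp [Function.update_of_ne hi]⟩ (liftWalk j a w)


lemma liftWalk_length (j : Fin k) (a : Fin k → V) {u v : V} (w : P.Walk u v) :
    (liftWalk j a w).length = w.length := by
  induction w with
  | nil => rfl
  | cons h w ih => exact congrArg Nat.succ ih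

lemma reachable_update (hP : P.Connected) (x : Fin k → V) (j : Fin k) (v : V) :
    (boxProdPow P k).Reachable x (Function.update x j v) := by
  obtain ⟨w⟩ := hP.preconnected (x j) v
  exact ⟨((liftWalk j x w).copy (Function.update_eq_self j x) rfl)⟩

lemma dist_update_le (hP : P.Connected) (x : Fin k → V) (j : Fin k) (v : V) :
    (boxProdPow P k).dist x (Function.update x j v) ≤ P.dist (x j) v := by
  obtain ⟨w, hw⟩ := hP.exists_walk_length_eq_dist (x j) v
  calc (boxProdPow P k).dist x (Function.update x j v)
      ≤ ((liftWalk j x w).copy (Function.update_eq_self j x) rfl).length :=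
        SimpleGraph.dist_le _
    _ = P.dist (x j) v := by rw [SimpleGraph.Walk.length_copy, liftWalk_length, hw]


lemma merge_insert {s : Finset (Fin k)} {j : Fin k} (hj : j ∉ s) (y x : Fin k → V) :
    mergeOn (insert j s) y x = Function.update (mergeOn s y x) j (y j) := by
  funext i
  by_cases h : i = j
  · subst h; simp [mergeOn, hj]
  · by_cases hs : i ∈ s <;> simp [mergeOn, h, hs, Function.update_of_ne h]

lemma merge_empty (y x : Fin k → V) : mergeOn (∅ : Finset (Fin k)) y x = x :=
  funext fun i => by simp [mergeOn]

lemma merge_univ (y x : Fin k → V) : mergeOn (Finset.univ : Finset (Fin k)) y x = y :=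
  funext fun i => by simp [mergeOn]

lemma pow_connected (hk : P.Connected) : (boxProdPow P k).Connected := by
  have hne : Nonempty V := hk.nonempty
  constructor
  intro x y
  have key : ∀ s : Finset (Fin k), (boxProdPow P k).Reachable x (mergeOn s y x) := by
    intro s
    induction s using Finset.induction with
    | empty => rw [merge_empty]
    | @insert j s hj ih =>
        rw [merge_insert hj]
        exact ih.trans (reachable_update hk _ j _)
  have := key Finset.univ
  rwa [merge_univ] at this

lemma pow_dist (hk : P.Connected) (x y : Fin k → V) :
    (boxProdPow P k).dist x y = ∑ j, P.dist (x j) (y j) := by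
  apply le_antisymm
  · -- build walk coordinatewise
    have key : ∀ s : Finset (Fin k),
        (boxProdPow P k).dist x (mergeOn s y x) ≤ ∑ j ∈ s, P.dist (x j) (y j) := by
      intro s
      induction s using Finset.induction with
      | empty => rw [merge_empty]; simp
      | @insert j s hj ih =>
          rw [merge_insert hj, Finset.sum_insert hj]
          calc (boxProdPow P k).dist x (Function.update (mergeOn s y x) j (y j))
              ≤ (boxProdPow P k).dist x (mergeOn s y x) +
                (boxProdPow P k).dist (mergeOn s y x) (Function.update (mergeOn s y x) j (y j)) :=
                (pow_connected hk).dist_triangle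
            _ ≤ ∑ i ∈ s, P.dist (x i) (y i) + P.dist (x j) (y j) := by
                have h2 := dist_update_le hk (mergeOn s y x) j (y j)
                have : (mergeOn s y x) j = x j := by simp [mergeOn, hj]
                rw [this] at h2
                exact Nat.add_le_add ih h2
            _ = P.dist (x j) (y j) + ∑ i ∈ s, P.dist (x i) (y i) := Nat.add_comm _ _
    have := key Finset.univ
    rwa [merge_univ] at this
  · -- any walk is at least the sum
    obtain ⟨w, hw⟩ := (pow_connected hk (V := V)).exists_walk_length_eq_dist x y
    rw [← hw]
    clear hw
    induction w with
    | nil => simp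
    | @cons a b c h w ih =>
        obtain ⟨j0, hadj, heq⟩ := h
        calc ∑ j, P.dist (a j) (c j)
            ≤ ∑ j, ((if j = j0 then 1 else 0) + P.dist (b j) (c j)) := by
              apply Finset.sum_le_sum
              intro i _
              by_cases hi : i = j0
              · subst hi
                simp only [if_pos rfl]
                calc P.dist (a i) (c i) ≤ P.dist (a i) (b i) + P.dist (b i) (c i) :=
                      hk.dist_triangle
                  _ ≤ 1 + P.dist (b i) (c i) := by
                      have : P.dist (a i) (b i) ≤ 1 := by
                        rw [SimpleGraph.dist_eq_one_iff_adj.mpr hadj]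
                      omega
              · rw [heq i hi]; simp [hi]
          _ = 1 + ∑ j, P.dist (b j) (c j) := by
              rw [Finset.sum_add_distrib]
              simp
          _ ≤ 1 + w.length := Nat.add_le_add_left ih 1
          _ = (SimpleGraph.Walk.cons (⟨j0, hadj, heq⟩ : (boxProdPow P k).Adj a b) w).length := by
              exact Nat.add_comm _ _

lemma iso_dist {W W' : Type} {G : SimpleGraph W} {G' : SimpleGraph W'} (f : G ≃g G')
    (hG : G.Connected) (u v : W) : G'.dist (f u) (f v) = G.dist u v := by
  apply le_antisymm
  · obtain ⟨w, hw⟩ := hG.exists_walk_length_eq_dist u v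
    calc G'.dist (f u) (f v) ≤ (w.map f.toHom).length := SimpleGraph.dist_le _
      _ = G.dist u v := by rw [SimpleGraph.Walk.length_map, hw]
  · obtain ⟨w, hw⟩ := (SimpleGraph.Reachable.map f.toHom (hG.preconnected u v)).exists_walk_length_eq_dist
    have := SimpleGraph.dist_le (w.map f.symm.toHom)
    rw [SimpleGraph.Walk.length_map, hw] at this
    simpa using this

lemma card_pi_set {k : ℕ} {V : Type} (S : Fin k → Set V) :
    Nat.card {x : Fin k → V | ∀ i, x i ∈ S i} = ∏ i, Nat.card (S i) := by
  rw [← Nat.card_pi]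
  exact Nat.card_congr
    { toFun := fun z => fun i => ⟨z.1 i, z.2 i⟩
      invFun := fun f => ⟨fun i => (f i).1, fun i => (f i).2⟩
      left_inv := fun z => rfl
      right_inv := fun f => rfl }

lemma set_eq_univ_of_card {V : Type} [Fintype V] (S : Set V)
    (h : Nat.card S = Fintype.card V) : S = Set.univ := by
  by_contra hne
  have hss : S ⊂ Set.univ := Set.ssubset_univ_iff.mpr hne
  have := Set.ncard_lt_ncard hss (Set.finite_univ)
  rw [Set.ncard_univ, Nat.card_eq_fintype_card] at this
  rw [Nat.card_coe_set_eq] at h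
  omega

/-- The "flat" through `a` with free coordinates `T`. -/
def Flat (T : Set (Fin k)) (a : Fin k → V) : Set (Fin k → V) := {x | ∀ i ∉ T, x i = a i}

lemma self_mem_flat {T : Set (Fin k)} (a : Fin k → V) : a ∈ Flat T a := fun _ _ => rfl

lemma flat_convex (hk : P.Connected) {T : Set (Fin k)} {a x y z : Fin k → V}
    (hx : x ∈ Flat T a) (hy : y ∈ Flat T a)
    (h : (boxProdPow P k).dist x z + (boxProdPow P k).dist z y = (boxProdPow P k).dist x y) :
    z ∈ Flat T a := by
  rw [pow_dist hk, pow_dist hk, pow_dist hk, ← Finset.sum_add_distrib] at h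
  have hle : ∀ i ∈ Finset.univ, P.dist (x i) (y i) ≤ P.dist (x i) (z i) + P.dist (z i) (y i) :=
    fun i _ => hk.dist_triangle
  have heq := (Finset.sum_eq_sum_iff_of_le hle).mp h.symm
  intro i hi
  have h0 : P.dist (x i) (y i) = 0 := by
    rw [hx i hi, hy i hi, SimpleGraph.dist_self]
  have := (heq i (Finset.mem_univ i)).symm
  rw [h0] at this
  have hxz : P.dist (x i) (z i) = 0 := by omega
  have := (hk.dist_eq_zero_iff).mp hxz
  rw [← this, hx i hi]

lemma mergeOn_btw (hk : P.Connected) (s : Finset (Fin k)) (u v : Fin k → V) :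
    (boxProdPow P k).dist u (mergeOn s u v) + (boxProdPow P k).dist (mergeOn s u v) v
      = (boxProdPow P k).dist u v := by
  rw [pow_dist hk, pow_dist hk, pow_dist hk, ← Finset.sum_add_distrib]
  apply Finset.sum_congr rfl
  intro i _
  by_cases h : i ∈ s <;> simp [mergeOn, h]

lemma image_flat_mergeOn_closed (hk : P.Connected)
    (φ : boxProdPow P k ≃g boxProdPow P k) {T : Set (Fin k)} {a : Fin k → V}
    {u v : Fin k → V} (hu : u ∈ φ '' Flat T a) (hv : v ∈ φ '' Flat T a)
    (s : Finset (Fin k)) : mergeOn s u v ∈ φ '' Flat T a := by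
  obtain ⟨x, hx, rfl⟩ := hu
  obtain ⟨y, hy, rfl⟩ := hv
  set m := mergeOn s (φ x) (φ y) with hm
  refine ⟨φ.symm m, ?_, by simp⟩
  apply flat_convex hk hx hy
  have e1 : (boxProdPow P k).dist x (φ.symm m)
      = (boxProdPow P k).dist (φ x) m := by
    have := iso_dist φ (pow_connected hk) x (φ.symm m)
    rw [RelIso.apply_symm_apply] at this
    exact this.symm
  have e2 : (boxProdPow P k).dist (φ.symm m) y
      = (boxProdPow P k).dist m (φ y) := by
    have := iso_dist φ (pow_connected hk) (φ.symm m) y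
    rw [RelIso.apply_symm_apply] at this
    exact this.symm
  have e3 := iso_dist φ (pow_connected hk) x y
  rw [e1, e2, ← e3]
  exact mergeOn_btw hk s (φ x) (φ y)

lemma mem_of_proj {C : Set (Fin k → V)}
    (hmix : ∀ u ∈ C, ∀ v ∈ C, ∀ s : Finset (Fin k), mergeOn s u v ∈ C)
    (hC : C.Nonempty) (z : Fin k → V) (hz : ∀ i, ∃ c ∈ C, c i = z i) : z ∈ C := by
  have key : ∀ s : Finset (Fin k), ∃ c ∈ C, ∀ i ∈ s, c i = z i := by
    intro s
    induction s using Finset.induction with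
    | empty => exact ⟨hC.choose, hC.choose_spec, by simp⟩
    | @insert j s hj ih =>
        obtain ⟨c, hc, hcs⟩ := ih
        obtain ⟨cj, hcj, hcjz⟩ := hz j
        refine ⟨mergeOn {j} cj c, hmix cj hcj c hc {j}, ?_⟩
        intro i hi
        rcases Finset.mem_insert.mp hi with h | h
        · subst h; simpa [mergeOn] using hcjz
        · by_cases hij : i = j
          · subst hij; simpa [mergeOn] using hcjz
          · simpa [mergeOn, hij] using hcs i h
  obtain ⟨c, hc, hcu⟩ := key Finset.univ
  have : c = z := funext fun i => hcu i (Finset.mem_univ i)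
  rwa [← this]

lemma mergeOn_singleton (j : Fin k) (u v : Fin k → V) :
    mergeOn {j} u v = Function.update v j (u j) := by
  funext i
  by_cases h : i = j
  · subst h; simp [mergeOn]
  · simp [mergeOn, h, Function.update_of_ne h]

/-- coordinate projections of a set -/
def proj (C : Set (Fin k → V)) (i : Fin k) : Set V := (fun x => x i) '' C

lemma image_flat_pi (hk : P.Connected) (φ : boxProdPow P k ≃g boxProdPow P k)
    (T : Set (Fin k)) (a : Fin k → V) :
    φ '' Flat T a = {x | ∀ i, x i ∈ proj (φ '' Flat T a) i} := by
  apply Set.Subset.antisymm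
  · intro x hx i
    exact ⟨x, hx, rfl⟩
  · intro z hz
    refine mem_of_proj (fun u hu v hv s => image_flat_mergeOn_closed hk φ hu hv s)
      ⟨φ a, a, self_mem_flat a, rfl⟩ z ?_
    intro i
    obtain ⟨c, hc, hci⟩ := hz i
    exact ⟨c, hc, hci⟩

lemma card_image_eq {α : Type} (φ : α ≃ α) (C : Set α) : Nat.card (⇑φ '' C) = Nat.card C :=
  (Nat.card_congr (Equiv.Set.image (⇑φ) C φ.injective)).symm

lemma card_flat_single (j : Fin k) (a : Fin k → V) :
    Nat.card (Flat ({j} : Set (Fin k)) a) = Fintype.card V := by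
  rw [← Nat.card_eq_fintype_card]
  apply Nat.card_congr
  exact
    { toFun := fun x => x.1 j
      invFun := fun v => ⟨Function.update a j v, fun i hi => by
        simp only [Set.mem_singleton_iff] at hi
        rw [Function.update_of_ne hi]⟩
      left_inv := fun x => Subtype.ext (funext fun i => by
        dsimp only
        by_cases h : i = j
        · subst h; simp
        · rw [Function.update_of_ne h]; exact (x.2 i (by simpa using h)).symm)
      right_inv := fun v => by simp }

lemma card_flat_pair {j j' : Fin k} (hjj' : j ≠ j') (a : Fin k → V) :
    Nat.card (Flat ({j, j'} : Set (Fin k)) a) = Fintype.card V * Fintype.card V := by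
  rw [← Nat.card_eq_fintype_card (α := V), ← Nat.card_prod]
  apply Nat.card_congr
  exact
    { toFun := fun x => (x.1 j, x.1 j')
      invFun := fun p => ⟨Function.update (Function.update a j p.1) j' p.2, fun i hi => by
        simp only [Set.mem_insert_iff, Set.mem_singleton_iff] at hi
        push_neg at hi
        rw [Function.update_of_ne hi.2, Function.update_of_ne hi.1]⟩
      left_inv := fun x => Subtype.ext (funext fun i => by
        dsimp only
        by_cases h' : i = j'
        · subst h'; simp
        · rw [Function.update_of_ne h']
          by_cases h : i = j
          · subst h; simp
          · rw [Function.update_of_ne h]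
            exact (x.2 i (by simp [h, h'])).symm)
      right_inv := fun p => by
        have h1 : (Function.update (Function.update a j p.1) j' p.2) j = p.1 := by
          rw [Function.update_of_ne hjj', Function.update_self]
        simp [h1] }

/-- `P` is isomorphic to the induced graph on a line. -/
noncomputable def lineGraphIso (j : Fin k) (a : Fin k → V) :
    P ≃g (boxProdPow P k).induce (Flat ({j} : Set (Fin k)) a) where
  toFun v := ⟨Function.update a j v, fun i hi => by
    simp only [Set.mem_singleton_iff] at hi
    rw [Function.update_of_ne hi]⟩
  invFun x := x.1 j
  left_inv v := by simp
  right_inv x := Subtype.ext (funext fun i => by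
    dsimp only
    by_cases h : i = j
    · subst h; simp
    · rw [Function.update_of_ne h]; exact (x.2 i (by simpa using h)).symm)
  map_rel_iff' := by
    intro u v
    simp only [SimpleGraph.comap_adj, Function.Embedding.coe_subtype]
    constructor
    · rintro ⟨j0, hadj, heq⟩
      simp only [Equiv.coe_fn_mk] at hadj
      by_cases h : j0 = j
      · subst h; simpa using hadj
      · exfalso
        rw [Function.update_of_ne (fun hc => h hc : j0 ≠ j) u a,
          Function.update_of_ne (fun hc => h hc : j0 ≠ j) v a] at hadj
        exact P.loopless.irrefl _ hadj
    · intro h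
      exact ⟨j, by simpa using h, fun i hi => by
        simp only [Equiv.coe_fn_mk]
        rw [Function.update_of_ne hi, Function.update_of_ne hi]⟩

/-- An automorphism induces an isomorphism between induced subgraphs. -/
noncomputable def induceImageIso {α : Type} {G : SimpleGraph α} (φ : G ≃g G) (s : Set α) :
    G.induce s ≃g G.induce (⇑φ '' s) where
  toEquiv := Equiv.Set.image (⇑φ) s (RelIso.injective φ)
  map_rel_iff' := by
    intro x y
    simp only [SimpleGraph.comap_adj, Function.Embedding.coe_subtype, Equiv.Set.image_apply]
    exact φ.map_adj_iff

lemma update_mem {C : Set (Fin k → V)}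
    (hmix : ∀ u ∈ C, ∀ v ∈ C, ∀ s : Finset (Fin k), mergeOn s u v ∈ C)
    {i0 : Fin k} {x c : Fin k → V} (hx : x ∈ C) (hc : c ∈ C) :
    Function.update x i0 (c i0) ∈ C := by
  have := hmix c hc x hx {i0}
  rwa [mergeOn_singleton] at this

variable (P) in
/-- Splitting off one coordinate of a merge-closed set. -/
noncomputable def splitIso {C : Set (Fin k → V)} {c0 : Fin k → V} (hc0 : c0 ∈ C)
    (hmix : ∀ u ∈ C, ∀ v ∈ C, ∀ s : Finset (Fin k), mergeOn s u v ∈ C) (i0 : Fin k) :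
    (boxProdPow P k).induce C ≃g
      (P.induce (proj C i0)).boxProd
        ((boxProdPow P k).induce {x | x ∈ C ∧ x i0 = c0 i0}) where
  toFun x := (⟨x.1 i0, ⟨x.1, x.2, rfl⟩⟩,
    ⟨Function.update x.1 i0 (c0 i0), update_mem hmix x.2 hc0, Function.update_self i0 _ _⟩)
  invFun p := ⟨Function.update p.2.1 i0 p.1.1, by
    obtain ⟨c, hc, hci⟩ := p.1.2
    rw [← hci]
    exact update_mem hmix p.2.2.1 hc⟩
  left_inv x := by
    apply Subtype.ext
    simp only [Function.update_idem]
    exact Function.update_eq_self i0 x.1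
  right_inv p := by
    refine Prod.ext (Subtype.ext ?_) (Subtype.ext ?_)
    · exact Function.update_self i0 _ _
    · simp only [Function.update_idem]
      conv_rhs => rw [← Function.update_eq_self i0 p.2.1]
      rw [p.2.2.2]
  map_rel_iff' := by
    rintro ⟨x, hx⟩ ⟨y, hy⟩
    simp only [Equiv.coe_fn_mk, SimpleGraph.boxProd_adj, SimpleGraph.comap_adj,
      Function.Embedding.coe_subtype, Subtype.mk.injEq, Prod.mk.injEq]
    constructor
    · rintro (⟨hadj, heq⟩ | ⟨hadj2, heq1⟩)
      · refine ⟨i0, hadj, fun i hi => ?_⟩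
        have := congrFun heq i
        rwa [Function.update_of_ne hi, Function.update_of_ne hi] at this
      · obtain ⟨j, hadj, heqj⟩ := hadj2
        have hji0 : j ≠ i0 := by
          intro h
          subst h
          rw [Function.update_self, Function.update_self] at hadj
          exact P.loopless.irrefl _ hadj
        rw [Function.update_of_ne hji0, Function.update_of_ne hji0] at hadj
        refine ⟨j, hadj, fun i hi => ?_⟩
        by_cases h : i = i0
        · subst h; exact Subtype.ext_iff.mp heq1
        · have := heqj i hi
          rwa [Function.update_of_ne h, Function.update_of_ne h] at this
    · rintro ⟨j, hadj, heqj⟩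
      by_cases h : j = i0
      · subst h
        refine Or.inl ⟨hadj, funext fun i => ?_⟩
        by_cases hi : i = j
        · subst hi; rw [Function.update_self, Function.update_self]
        · rw [Function.update_of_ne hi, Function.update_of_ne hi]
          exact heqj i hi
      · refine Or.inr ⟨⟨j, ?_, fun i hi => ?_⟩, Subtype.ext (heqj i0 (fun hc => h hc.symm))⟩
        · rwa [Function.update_of_ne h, Function.update_of_ne h]
        · by_cases hii : i = i0
          · subst hii; rw [Function.update_self, Function.update_self]
          · rw [Function.update_of_ne hii, Function.update_of_ne hii]
            exact heqj i hi

lemma card_image_inj {α : Type} {f : α → α} (hf : Function.Injective f) (C : Set α) :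
    Nat.card (f '' C) = Nat.card C :=
  (Nat.card_congr (Equiv.Set.image f C hf)).symm

lemma card_singleton_set {α : Type} {s : Set α} {v : α} (h : Nat.card s = 1) (hv : v ∈ s) :
    s = {v} := by
  rw [Nat.card_coe_set_eq, Set.ncard_eq_one] at h
  obtain ⟨b, rfl⟩ := h
  rw [Set.mem_singleton_iff] at hv
  rw [hv]

lemma image_line (hP : P.IsPrime) (φ : boxProdPow P k ≃g boxProdPow P k)
    (j : Fin k) (a : Fin k → V) :
    ∃ m : Fin k, ⇑φ '' Flat ({j} : Set (Fin k)) a = Flat ({m} : Set (Fin k)) (φ a) := by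
  obtain ⟨hconn, hcard2, hprime⟩ := hP
  set C := ⇑φ '' Flat ({j} : Set (Fin k)) a with hC
  have hmix : ∀ u ∈ C, ∀ v ∈ C, ∀ s : Finset (Fin k), mergeOn s u v ∈ C :=
    fun u hu v hv s => image_flat_mergeOn_closed hconn φ hu hv s
  have hfa : φ a ∈ C := ⟨a, self_mem_flat a, rfl⟩
  have hpi : C = {x | ∀ i, x i ∈ proj C i} := image_flat_pi hconn φ _ a
  have hcardC : Nat.card C = Fintype.card V := by
    rw [hC, card_image_inj (RelIso.injective φ), card_flat_single]
  have hpos : ∀ i, 1 ≤ Nat.card (proj C i) := by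
    intro i
    have hne : (proj C i).Nonempty := ⟨(φ a) i, ⟨φ a, hfa, rfl⟩⟩
    haveI := hne.to_subtype
    exact Nat.card_pos
  have dichotomy : ∀ i, Nat.card (proj C i) = 1 ∨ Nat.card (proj C i) = Fintype.card V := by
    intro i
    have hiso := splitIso P hfa hmix i
    letI : Fintype (proj C i) := Fintype.ofFinite _
    letI : Fintype ({x | x ∈ C ∧ x i = (φ a) i} : Set (Fin k → V)) := Fintype.ofFinite _
    have hPiso : Nonempty (P ≃g (P.induce (proj C i)).boxProd
        ((boxProdPow P k).induce {x | x ∈ C ∧ x i = (φ a) i})) :=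
      ⟨((lineGraphIso j a).trans (induceImageIso φ _)).trans hiso⟩
    rcases hprime _ _ _ _ hPiso with h1 | h2
    · left; rw [Nat.card_eq_fintype_card]; exact h1
    · right
      have hsplit : Nat.card C = Nat.card (proj C i) *
          Nat.card ({x | x ∈ C ∧ x i = (φ a) i} : Set (Fin k → V)) := by
        have := Nat.card_congr hiso.toEquiv
        rw [Nat.card_prod] at this
        exact this
      have hD1 : Nat.card ({x | x ∈ C ∧ x i = (φ a) i} : Set (Fin k → V)) = 1 := by
        rw [Nat.card_eq_fintype_card]; exact h2
      rw [hD1, mul_one] at hsplit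
      rw [← hsplit, ← hcardC]
  have hprod : ∏ i, Nat.card (proj C i) = Fintype.card V := by
    rw [← card_pi_set, ← hcardC]
    exact congrArg Nat.card (congrArg _ hpi.symm)
  -- there is exactly one coordinate with full projection
  have hexists : ∃ m, Nat.card (proj C m) = Fintype.card V := by
    by_contra hno
    push_neg at hno
    have hall : ∀ i, Nat.card (proj C i) = 1 := by
      intro i
      rcases dichotomy i with h | h
      · exact h
      · exact absurd h (hno i)
    rw [Finset.prod_congr rfl (fun i _ => hall i), Finset.prod_const_one] at hprod
    omega
  obtain ⟨m, hm⟩ := hexists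
  have huniq : ∀ i, i ≠ m → Nat.card (proj C i) = 1 := by
    intro i him
    rcases dichotomy i with h | h
    · exact h
    · exfalso
      have hsub : ({i, m} : Finset (Fin k)) ⊆ Finset.univ := Finset.subset_univ _
      have hge : ∏ l ∈ ({i, m} : Finset (Fin k)), Nat.card (proj C l)
          ≤ ∏ l, Nat.card (proj C l) :=
        Finset.prod_le_prod_of_subset_of_one_le' hsub (fun l _ _ => hpos l)
      rw [Finset.prod_pair him, hprod, h, hm] at hge
      nlinarith [hcard2]
  -- conclude
  refine ⟨m, ?_⟩
  have hSm : proj C m = Set.univ := set_eq_univ_of_card _ hm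
  have hSi : ∀ i, i ≠ m → proj C i = {(φ a) i} := fun i him =>
    card_singleton_set (huniq i him) ⟨φ a, hfa, rfl⟩
  rw [hpi]
  ext x
  constructor
  · intro hx i hi
    have := hx i
    rw [hSi i hi] at this
    exact this
  · intro hx i
    by_cases h : i = m
    · subst h; rw [hSm]; trivial
    · rw [hSi i h]; exact hx i h

section Dir

variable (hP : P.IsPrime) (φ : boxProdPow P k ≃g boxProdPow P k)

/-- The direction of the image line. -/
noncomputable def dir (j : Fin k) (a : Fin k → V) : Fin k :=
  (image_line hP φ j a).choose

lemma dir_spec (j : Fin k) (a : Fin k → V) :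
    ⇑φ '' Flat ({j} : Set (Fin k)) a = Flat ({dir hP φ j a} : Set (Fin k)) (φ a) :=
  (image_line hP φ j a).choose_spec

lemma line_dir_unique (h2 : 2 ≤ Fintype.card V) {m m' : Fin k} {p p' : Fin k → V}
    (h : Flat ({m} : Set (Fin k)) p = Flat ({m'} : Set (Fin k)) p') : m = m' := by
  by_contra hne
  haveI : Nontrivial V := Fintype.one_lt_card_iff_nontrivial.mp h2
  obtain ⟨v, hv⟩ := exists_ne (p' m)
  have hx : Function.update p m v ∈ Flat ({m} : Set (Fin k)) p := by
    intro i hi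
    simp only [Set.mem_singleton_iff] at hi
    rw [Function.update_of_ne hi]
  rw [h] at hx
  have := hx m (by simpa using hne)
  rw [Function.update_self] at this
  exact hv this

lemma flat_shift {T : Set (Fin k)} {a b : Fin k → V} (hb : b ∈ Flat T a) :
    Flat T b = Flat T a := by
  ext x
  exact ⟨fun hx i hi => (hx i hi).trans (hb i hi), fun hx i hi => (hx i hi).trans (hb i hi).symm⟩

lemma dir_inj (h2 : 2 ≤ Fintype.card V) (a : Fin k → V) :
    Function.Injective (fun j => dir hP φ j a) := by
  intro j j' h
  simp only at h
  have himg : ⇑φ '' Flat ({j} : Set (Fin k)) a = ⇑φ '' Flat ({j'} : Set (Fin k)) a := by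
    rw [dir_spec hP, dir_spec hP, h]
  have := Set.image_injective.mpr (RelIso.injective φ) himg
  exact line_dir_unique h2 this

lemma dir_shift (h2 : 2 ≤ Fintype.card V) {j : Fin k} {a b : Fin k → V}
    (hb : b ∈ Flat ({j} : Set (Fin k)) a) : dir hP φ j b = dir hP φ j a := by
  apply line_dir_unique h2 (p := φ b) (p' := φ a)
  rw [← dir_spec, ← dir_spec, flat_shift hb]

lemma flat_mono {T T' : Set (Fin k)} (h : T ⊆ T') (a : Fin k → V) :
    Flat T a ⊆ Flat T' a := fun x hx i hi => hx i (fun hc => hi (h hc))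

lemma line_subset_pi {m : Fin k} {p : Fin k → V} {S : Fin k → Set V}
    (h : Flat ({m} : Set (Fin k)) p ⊆ {x | ∀ i, x i ∈ S i}) : S m = Set.univ := by
  apply Set.eq_univ_of_forall
  intro v
  have hx : Function.update p m v ∈ Flat ({m} : Set (Fin k)) p := by
    intro i hi
    simp only [Set.mem_singleton_iff] at hi
    rw [Function.update_of_ne hi]
  have := h hx m
  rwa [Function.update_self] at this

lemma dir_plane (h2 : 2 ≤ Fintype.card V) (hconn : P.Connected) {j j' : Fin k} (hjj' : j ≠ j')
    {a b : Fin k → V} (hb : b ∈ Flat ({j} : Set (Fin k)) a) :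
    dir hP φ j' b = dir hP φ j' a := by
  set C := ⇑φ '' Flat ({j, j'} : Set (Fin k)) a with hC
  have hpi : C = {x | ∀ i, x i ∈ proj C i} := image_flat_pi hconn φ _ a
  have hcardC : Nat.card C = Fintype.card V * Fintype.card V := by
    rw [hC, card_image_inj (RelIso.injective φ), card_flat_pair hjj']
  have hpos : ∀ i, 1 ≤ Nat.card (proj C i) := by
    intro i
    have hne : (proj C i).Nonempty := ⟨(φ a) i, ⟨φ a, ⟨a, self_mem_flat a, rfl⟩, rfl⟩⟩
    haveI := hne.to_subtype
    exact Nat.card_pos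
  have hprod : ∏ i, Nat.card (proj C i) = Fintype.card V * Fintype.card V := by
    rw [← card_pi_set, ← hcardC]
    exact congrArg Nat.card (congrArg _ hpi.symm)
  -- three lines inside the plane image
  have hsub : ∀ (m : Fin k) (p : Fin k → V),
      Flat ({m} : Set (Fin k)) p ⊆ C → Nat.card (proj C m) = Fintype.card V := by
    intro m p hsubm
    rw [hpi] at hsubm
    rw [line_subset_pi hsubm, ← Nat.card_eq_fintype_card]
    exact Nat.card_congr (Equiv.Set.univ V)
  have sub1 : Flat ({dir hP φ j a} : Set (Fin k)) (φ a) ⊆ C := by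
    rw [← dir_spec]
    exact Set.image_mono (flat_mono (by intro t ht; simp at ht; simp [ht]) a)
  have sub2 : Flat ({dir hP φ j' a} : Set (Fin k)) (φ a) ⊆ C := by
    rw [← dir_spec]
    exact Set.image_mono (flat_mono (by intro t ht; simp at ht; simp [ht]) a)
  have sub3 : Flat ({dir hP φ j' b} : Set (Fin k)) (φ b) ⊆ C := by
    rw [← dir_spec]
    apply Set.image_mono
    intro x hx i hi
    simp only [Set.mem_insert_iff, Set.mem_singleton_iff, not_or] at hi
    exact (hx i (by simpa using hi.2)).trans (hb i (by simpa using hi.1))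
  -- if the three directions were pairwise distinct we get a contradiction
  by_contra hne
  have hne2 : dir hP φ j' b ≠ dir hP φ j a := by
    have h1 : dir hP φ j b = dir hP φ j a := dir_shift hP φ h2 hb
    intro hcon
    have := dir_inj hP φ h2 b (a₁ := j) (a₂ := j') (by simp only; rw [h1, hcon])
    exact hjj' this
  have hne3 : dir hP φ j a ≠ dir hP φ j' a := fun hcon => hjj' (dir_inj hP φ h2 a hcon)
  -- product of cards over the three distinct indices
  have hfull1 := hsub _ _ sub1
  have hfull2 := hsub _ _ sub2
  have hfull3 := hsub _ _ sub3
  have hsubset : ({dir hP φ j a, dir hP φ j' a, dir hP φ j' b} : Finset (Fin k)) ⊆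
      Finset.univ := Finset.subset_univ _
  have hge : ∏ l ∈ ({dir hP φ j a, dir hP φ j' a, dir hP φ j' b} : Finset (Fin k)),
      Nat.card (proj C l) ≤ ∏ l, Nat.card (proj C l) :=
    Finset.prod_le_prod_of_subset_of_one_le' hsubset (fun l _ _ => hpos l)
  rw [Finset.prod_insert (by simp [hne3, Ne.symm hne2]),
    Finset.prod_insert (by simp only [Finset.mem_singleton]; exact fun h => hne h.symm), Finset.prod_singleton,
    hfull1, hfull2, hfull3, hprod] at hge
  nlinarith [h2]

lemma dir_adj_const (h2 : 2 ≤ Fintype.card V) (hconn : P.Connected) {b c : Fin k → V}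
    (h : (boxProdPow P k).Adj b c) (j : Fin k) : dir hP φ j c = dir hP φ j b := by
  obtain ⟨i, hadj, heq⟩ := h
  have hc : c ∈ Flat ({i} : Set (Fin k)) b := fun l hl => (heq l (by simpa using hl)).symm
  by_cases hji : j = i
  · subst hji
    exact dir_shift hP φ h2 hc
  · exact dir_plane hP φ h2 hconn (fun hcon => hji hcon.symm) hc

lemma dir_const (h2 : 2 ≤ Fintype.card V) (hconn : P.Connected) (b c : Fin k → V)
    (j : Fin k) : dir hP φ j c = dir hP φ j b := by
  obtain ⟨w⟩ := (pow_connected hconn).preconnected b c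
  induction w with
  | nil => rfl
  | @cons x y z hadj w ih =>
      rw [ih, dir_adj_const hP φ h2 hconn hadj j]

end Dir

section Extract

variable (hP : P.IsPrime) (φ : boxProdPow P k ≃g boxProdPow P k)

/-- The permutation of coordinates induced by an automorphism. -/
noncomputable def sigma : Equiv.Perm (Fin k) :=
  Equiv.ofBijective (fun j => dir hP φ j (fun _ => (hP.1.nonempty).some))
    ((Finite.injective_iff_bijective).mp (dir_inj hP φ hP.2.1 _))

lemma sigma_eq_dir (j : Fin k) (a : Fin k → V) : sigma hP φ j = dir hP φ j a := by
  unfold sigma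
  simp only [Equiv.ofBijective_apply]
  exact dir_const hP φ hP.2.1 hP.1 a _ j

lemma image_flat_mem {j : Fin k} {b b' : Fin k → V} (hb' : b' ∈ Flat ({j} : Set (Fin k)) b) :
    φ b' ∈ Flat ({sigma hP φ j} : Set (Fin k)) (φ b) := by
  rw [sigma_eq_dir hP φ j b, ← dir_spec]
  exact ⟨b', hb', rfl⟩

lemma update_mem_flat (z : Fin k → V) (i : Fin k) (v : V) :
    Function.update z i v ∈ Flat ({i} : Set (Fin k)) z := by
  intro l hl
  simp only [Set.mem_singleton_iff] at hl
  rw [Function.update_of_ne hl]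

/-- changing coordinates other than `j` does not affect coordinate `σ j` of the image -/
lemma indep {j : Fin k} {x y : Fin k → V} (hxy : x j = y j) :
    (φ x) (sigma hP φ j) = (φ y) (sigma hP φ j) := by
  have key : ∀ s : Finset (Fin k), j ∉ s →
      (φ (mergeOn s y x)) (sigma hP φ j) = (φ x) (sigma hP φ j) := by
    intro s
    induction s using Finset.induction with
    | empty => intro _; rw [merge_empty]
    | @insert i s hi ih =>
        intro hjs
        have hjne : j ≠ i := fun hc => hjs (by rw [hc]; exact Finset.mem_insert_self i s)
        have hjs' : j ∉ s := fun hc => hjs (Finset.mem_insert_of_mem hc)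
        rw [merge_insert hi]
        have hmem : Function.update (mergeOn s y x) i (y i)
            ∈ Flat ({i} : Set (Fin k)) (mergeOn s y x) := update_mem_flat _ i _
        have := image_flat_mem hP φ hmem (sigma hP φ j)
          (by simp only [Set.mem_singleton_iff]
              exact fun hc => hjne ((sigma hP φ).injective hc))
        rw [this]
        exact ih hjs'
  have h1 := key (Finset.univ \ {j}) (by simp)
  have h2 : mergeOn (Finset.univ \ {j}) y x = y := by
    funext i
    by_cases h : i = j
    · subst h; simpa [mergeOn] using hxy
    · simp [mergeOn, h]
  rw [h2] at h1
  exact h1.symm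

/-- the coordinate maps -/
noncomputable def gfun (j : Fin k) (v : V) : V :=
  φ (Function.update (fun _ => (hP.1.nonempty).some) j v) (sigma hP φ j)

lemma phi_apply (x : Fin k → V) (m : Fin k) :
    (φ x) m = gfun hP φ ((sigma hP φ).symm m) (x ((sigma hP φ).symm m)) := by
  set j := (sigma hP φ).symm m with hj
  have hm : m = sigma hP φ j := ((sigma hP φ).apply_symm_apply m).symm
  rw [hm]
  exact indep hP φ (by rw [Function.update_self])

lemma gfun_inj (j : Fin k) : Function.Injective (gfun hP φ j) := by
  intro v w h
  set a0 : Fin k → V := fun _ => (hP.1.nonempty).some with ha0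
  have hflat : Function.update a0 j w ∈ Flat ({j} : Set (Fin k)) (Function.update a0 j v) := by
    intro l hl
    simp only [Set.mem_singleton_iff] at hl
    rw [Function.update_of_ne hl, Function.update_of_ne hl]
  have hoff := image_flat_mem hP φ hflat
  have heq : φ (Function.update a0 j v) = φ (Function.update a0 j w) := by
    funext m
    by_cases hm : m = sigma hP φ j
    · subst hm; exact h
    · exact (hoff m (by simpa using hm)).symm
  have := RelIso.injective φ heq
  have := congrFun this j
  rwa [Function.update_self, Function.update_self] at this

lemma gfun_adj {j : Fin k} {v w : V} :
    P.Adj (gfun hP φ j v) (gfun hP φ j w) ↔ P.Adj v w := by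
  set a0 : Fin k → V := fun _ => (hP.1.nonempty).some with ha0
  set xv := Function.update a0 j v with hxv
  set xw := Function.update a0 j w with hxw
  have hflat : xw ∈ Flat ({j} : Set (Fin k)) xv := by
    intro l hl
    simp only [Set.mem_singleton_iff] at hl
    rw [hxv, hxw, Function.update_of_ne hl, Function.update_of_ne hl]
  have hoff := image_flat_mem hP φ hflat
  constructor
  · intro h
    have hadjX : (boxProdPow P k).Adj (φ xv) (φ xw) := by
      refine ⟨sigma hP φ j, ?_, fun m hm => (hoff m (by simpa using hm)).symm⟩
      exact h
    have := φ.map_rel_iff.mp hadjX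
    obtain ⟨j0, hadj, heq⟩ := this
    by_cases hj0 : j0 = j
    · subst hj0
      rwa [hxv, hxw, Function.update_self, Function.update_self] at hadj
    · exfalso
      rw [hxv, hxw, Function.update_of_ne hj0, Function.update_of_ne hj0] at hadj
      exact P.loopless.irrefl _ hadj
  · intro h
    have hadjX : (boxProdPow P k).Adj xv xw := by
      refine ⟨j, ?_, fun l hl => ?_⟩
      · rw [hxv, hxw, Function.update_self, Function.update_self]; exact h
      · rw [hxv, hxw, Function.update_of_ne hl, Function.update_of_ne hl]
    have := φ.map_rel_iff.mpr hadjX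
    obtain ⟨j0, hadj, heq⟩ := this
    by_cases hj0 : j0 = sigma hP φ j
    · subst hj0
      exact hadj
    · exfalso
      have h1 : (φ xv) j0 = (φ xw) j0 := (hoff j0 (by simpa using hj0)).symm
      rw [h1] at hadj
      exact P.loopless.irrefl _ hadj

/-- the coordinate automorphisms of `P` -/
noncomputable def gIso (j : Fin k) : P ≃g P where
  toEquiv := Equiv.ofBijective (gfun hP φ j)
    ((Finite.injective_iff_bijective).mp (gfun_inj hP φ j))
  map_rel_iff' := gfun_adj hP φ

lemma gIso_apply (j : Fin k) (v : V) : gIso hP φ j v = gfun hP φ j v := rfl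

end Extract

section Wreath

variable (P) (k)

/-- A wreath product element acting on the power graph. -/
noncomputable def wreathToAut (g : Fin k → (P ≃g P)) (σ : Equiv.Perm (Fin k)) :
    boxProdPow P k ≃g boxProdPow P k where
  toFun x := fun m => g m (x (σ.symm m))
  invFun y := fun j => (g (σ j)).symm (y (σ j))
  left_inv x := funext fun j => by simp
  right_inv y := funext fun m => by simp
  map_rel_iff' := by
    intro x y
    simp only [Equiv.coe_fn_mk]
    constructor
    · rintro ⟨m0, hadj, heq⟩
      refine ⟨σ.symm m0, (g m0).map_rel_iff.mp hadj, fun i hi => ?_⟩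
      have hne : σ i ≠ m0 := fun hc => hi (by rw [← hc]; simp)
      have := heq (σ i) hne
      simp only [Equiv.symm_apply_apply] at this
      exact (RelIso.injective (g (σ i))) this
    · rintro ⟨j, hadj, heq⟩
      refine ⟨σ j, ?_, fun m hm => ?_⟩
      · simp only [Equiv.symm_apply_apply]
        exact (g (σ j)).map_rel_iff.mpr hadj
      · have hne : σ.symm m ≠ j := fun hc => hm (by rw [← hc]; simp)
        dsimp only
        rw [heq (σ.symm m) hne]

/-- The homomorphism from the wreath product into the automorphism group. -/
noncomputable def Phi :
    SemidirectProduct (Fin k → (P ≃g P)) (Equiv.Perm (Fin k))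
      (permCoordAction k (P ≃g P)) →* (boxProdPow P k ≃g boxProdPow P k) where
  toFun p := wreathToAut P k p.left p.right
  map_one' := RelIso.ext fun x => funext fun m => rfl
  map_mul' p q := RelIso.ext fun x => funext fun m => rfl

variable {P} {k}

lemma Phi_injective (h2 : 2 ≤ Fintype.card V) (hk : 0 < k) :
    Function.Injective (Phi P k) := by
  haveI : Nontrivial V := Fintype.one_lt_card_iff_nontrivial.mp h2
  rw [injective_iff_map_eq_one]
  intro p hp
  have happ : ∀ (x : Fin k → V) (m : Fin k), p.left m (x (p.right.symm m)) = x m := by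
    intro x m
    have h0 : (Phi P k p) x = x := by rw [hp]; rfl
    exact congrFun h0 m
  have step1 : ∀ (m : Fin k) (v : V), p.left m v = v := by
    intro m v
    have := happ (fun _ => v) m
    exact this
  have hsymm : ∀ m, p.right.symm m = m := by
    intro m
    by_contra hne
    obtain ⟨v, w, hvw⟩ := exists_pair_ne V
    set x : Fin k → V := Function.update (fun _ => v) (p.right.symm m) w with hx
    have := happ x m
    rw [step1] at this
    have hxj : x (p.right.symm m) = w := Function.update_self _ _ _
    have hxm : x m = v := Function.update_of_ne (fun hc => hne hc.symm) _ _
    rw [hxj, hxm] at this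
    exact hvw this.symm
  have hright : p.right = 1 := by
    apply Equiv.ext
    intro m
    have h1 := hsymm (p.right m)
    have h2' := p.right.symm_apply_apply m
    rw [h1] at h2'
    exact h2'.symm ▸ h2'
  have hleft : p.left = 1 := by
    funext m
    exact RelIso.ext fun v => step1 m v
  exact SemidirectProduct.ext hleft hright

lemma Phi_surjective (hP : P.IsPrime) : Function.Surjective (Phi P k) := by
  intro φ
  refine ⟨⟨fun m => gIso hP φ ((sigma hP φ).symm m), sigma hP φ⟩, ?_⟩
  apply RelIso.ext
  intro x
  funext m
  exact (phi_apply hP φ x m).symm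

end Wreath

end SabAux

/-- (Sabidussi) For a prime graph `P` and `k ≥ 1`, the automorphism group of the
`k`-fold box product `P^{□k}` is isomorphic to the wreath product
`Aut(P) ≀ S_k = (Fin k → Aut(P)) ⋊ Perm (Fin k)`, where `Perm (Fin k)` acts by
permuting the coordinates. -/
theorem aut_boxProdPow_eq_wreath {V : Type} [Fintype V] (P : SimpleGraph V)
    (hP : P.IsPrime) (k : ℕ) (hk : 0 < k) :
    Nonempty ((boxProdPow P k ≃g boxProdPow P k) ≃*
      SemidirectProduct (Fin k → (P ≃g P)) (Equiv.Perm (Fin k))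
        (permCoordAction k (P ≃g P))) :=
  ⟨(MulEquiv.ofBijective (SabAux.Phi P k)
      ⟨SabAux.Phi_injective hP.2.1 hk, SabAux.Phi_surjective hP⟩).symm⟩
end

section
/- Let P be a prime graph and k a positive integer. Then the automorphism group of the k-fold box product P^{□k} has cardinality k! · |Aut(P)|^k. -/
open SimpleGraph

namespace Sab
open Function

variable {V : Type} {P : SimpleGraph V} {k : ℕ}

lemma adj_iff {x y : Fin k → V} :
    (boxProdPow P k).Adj x y ↔ ∃ j, P.Adj (x j) (y j) ∧ ∀ t, t ≠ j → x t = y t := Iff.rfl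

/-- embed `P` into the power along coordinate `i`, other coordinates given by `a`. -/
def liftHom (P : SimpleGraph V) (a : Fin k → V) (i : Fin k) : P →g boxProdPow P k where
  toFun v := Function.update a i v
  map_rel' := by
    intro u v h
    exact ⟨i, by simpa using h, fun t ht => by simp [Function.update_of_ne ht]⟩

lemma exists_walk_le (hP : P.Connected) (s : Finset (Fin k)) :
    ∀ (x y : Fin k → V), (∀ t ∉ s, x t = y t) →
      ∃ w : (boxProdPow P k).Walk x y, w.length ≤ ∑ t ∈ s, P.dist (x t) (y t) := by
  induction s using Finset.induction_on with
  | empty =>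
    intro x y h
    obtain rfl : x = y := funext fun t => h t (by simp)
    exact ⟨Walk.nil, by simp⟩
  | insert _ _ ha ih =>
    rename_i a s
    intro x y h
    obtain ⟨wp, hwp⟩ := hP.exists_walk_length_eq_dist (x a) (y a)
    have e1 : Function.update x a (x a) = x := Function.update_eq_self a x
    let w1 : (boxProdPow P k).Walk x (Function.update x a (y a)) :=
      (wp.map (liftHom P x a)).copy (by exact Function.update_eq_self a x) rfl
    obtain ⟨w2, hw2⟩ := ih (Function.update x a (y a)) y (by
      intro t ht
      rcases eq_or_ne t a with rfl | hta
      · simp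
      · rw [Function.update_of_ne hta]
        exact h t (by simp [ht, hta]))
    refine ⟨w1.append w2, ?_⟩
    rw [Walk.length_append, Finset.sum_insert ha]
    have hl1 : w1.length = P.dist (x a) (y a) := by
      simp only [w1, Walk.length_copy, Walk.length_map, hwp]
      exact (Walk.length_copy _ _ _).trans ((Walk.length_map _ _).trans hwp)
    have : ∑ t ∈ s, P.dist (Function.update x a (y a) t) (y t) = ∑ t ∈ s, P.dist (x t) (y t) :=
      Finset.sum_congr rfl fun t hts => by
        rw [Function.update_of_ne (fun hh : t = a => ha (hh ▸ hts))]
    omega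
lemma pow_connected (hP : P.Connected) : (boxProdPow P k).Connected := by
  have : Nonempty V := hP.nonempty
  constructor
  intro x y
  obtain ⟨w, -⟩ := exists_walk_le hP Finset.univ x y (by simp)
  exact ⟨w⟩

lemma sum_dist_le_length (hP : P.Connected) {x y : Fin k → V}
    (w : (boxProdPow P k).Walk x y) :
    ∑ t, P.dist (x t) (y t) ≤ w.length := by
  induction w with
  | nil => simp
  | cons h p ih =>
    rename_i u z v
    rw [Walk.length_cons]
    obtain ⟨j, hj, hother⟩ := h
    have h1 : ∑ t, P.dist (u t) (z t) = 1 := by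
      rw [Finset.sum_eq_single j]
      · exact SimpleGraph.dist_eq_one_iff_adj.mpr hj
      · intro t _ htj
        rw [hother t htj, SimpleGraph.dist_self]
      · simp
    calc ∑ t, P.dist (u t) (v t) ≤ ∑ t, (P.dist (u t) (z t) + P.dist (z t) (v t)) :=
          Finset.sum_le_sum fun t _ => hP.dist_triangle
      _ = 1 + ∑ t, P.dist (z t) (v t) := by rw [Finset.sum_add_distrib, h1]
      _ ≤ 1 + p.length := by omega
      _ = p.length + 1 := by omega

lemma dist_eq_sum (hP : P.Connected) (x y : Fin k → V) :
    (boxProdPow P k).dist x y = ∑ t, P.dist (x t) (y t) := by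
  refine le_antisymm ?_ ?_
  · obtain ⟨w, hw⟩ := exists_walk_le hP Finset.univ x y (by simp)
    exact (SimpleGraph.dist_le w).trans hw
  · obtain ⟨w, hw⟩ := (pow_connected hP).exists_walk_length_eq_dist x y
    exact hw ▸ sum_dist_le_length hP w

lemma iso_dist_le {V' W' : Type} {G : SimpleGraph V'} {H : SimpleGraph W'}
    (f : G ≃g H) (x y : V') : H.dist (f x) (f y) ≤ G.dist x y := by
  by_cases hr : G.Reachable x y
  · obtain ⟨w, hw⟩ := hr.exists_walk_length_eq_dist
    calc H.dist (f x) (f y) ≤ (w.map f.toHom).length := SimpleGraph.dist_le _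
      _ = G.dist x y := by rw [Walk.length_map, hw]
  · have : ¬ H.Reachable (f x) (f y) := by
      intro hc
      obtain ⟨w⟩ := hc
      exact hr ⟨(w.map f.symm.toHom).copy (by simp) (by simp)⟩
    rw [SimpleGraph.dist_eq_zero_of_not_reachable hr,
        SimpleGraph.dist_eq_zero_of_not_reachable this]

lemma iso_dist_eq {V' W' : Type} {G : SimpleGraph V'} {H : SimpleGraph W'}
    (f : G ≃g H) (x y : V') : H.dist (f x) (f y) = G.dist x y := by
  refine le_antisymm (iso_dist_le f x y) ?_
  have := iso_dist_le f.symm (f x) (f y)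
  simpa using this

/-! ### Layers and mixes -/

def layer (i : Fin k) (a : Fin k → V) : Set (Fin k → V) := {x | ∀ t, t ≠ i → x t = a t}

lemma self_mem_layer {i : Fin k} {a : Fin k → V} : a ∈ layer i a := fun _ _ => rfl

lemma update_mem_layer {i : Fin k} {a : Fin k → V} (v : V) :
    Function.update a i v ∈ layer i a := fun t ht => Function.update_of_ne ht v a

lemma layer_eq_update_image {i : Fin k} {a : Fin k → V} :
    layer i a = (fun v => Function.update a i v) '' Set.univ := by
  ext x
  constructor
  · intro hx
    refine ⟨x i, trivial, funext fun t => ?_⟩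
    rcases eq_or_ne t i with rfl | ht
    · simp
    · exact (Function.update_of_ne ht (x i) a).trans (hx t ht).symm
  · rintro ⟨v, -, rfl⟩
    exact update_mem_layer v

/-- the direction of a layer is determined (if `V` is nontrivial). -/
lemma layer_dir_unique [Nontrivial V] {i j : Fin k} {a b : Fin k → V}
    (h : layer i a = layer j b) : i = j := by
  by_contra hij
  have ha : a ∈ layer j b := h ▸ self_mem_layer
  obtain ⟨v, hv⟩ := exists_ne (a i)
  have hu : Function.update a i v ∈ layer j b := h ▸ update_mem_layer v
  have h1 : Function.update a i v i = b i := hu i hij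
  have h2 : a i = b i := ha i hij
  rw [Function.update_self] at h1
  exact hv (h1.trans h2.symm)

lemma layer_eq_layer_of_mem {i : Fin k} {a b : Fin k → V} (h : b ∈ layer i a) :
    layer i b = layer i a := by
  ext x
  exact ⟨fun hx t ht => (hx t ht).trans (h t ht), fun hx t ht => (hx t ht).trans (h t ht).symm⟩

def mix (T : Finset (Fin k)) (x y : Fin k → V) : Fin k → V :=
  fun t => if t ∈ T then x t else y t

lemma dist_mix (hP : P.Connected) (T : Finset (Fin k)) (x y : Fin k → V) :
    (boxProdPow P k).dist x (mix T x y) + (boxProdPow P k).dist (mix T x y) y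
      = (boxProdPow P k).dist x y := by
  rw [dist_eq_sum hP, dist_eq_sum hP, dist_eq_sum hP, ← Finset.sum_add_distrib]
  refine Finset.sum_congr rfl fun t _ => ?_
  by_cases ht : t ∈ T <;> simp [mix, ht, SimpleGraph.dist_self]

/-- geodesic closedness of layers. -/
lemma layer_geodesic (hP : P.Connected) {i : Fin k} {a : Fin k → V} {x y u : Fin k → V}
    (hx : x ∈ layer i a) (hy : y ∈ layer i a)
    (h : (boxProdPow P k).dist x u + (boxProdPow P k).dist u y = (boxProdPow P k).dist x y) :
    u ∈ layer i a := by
  rw [dist_eq_sum hP, dist_eq_sum hP, dist_eq_sum hP, ← Finset.sum_add_distrib] at h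
  have hle : ∀ t ∈ Finset.univ, P.dist (x t) (y t) ≤ P.dist (x t) (u t) + P.dist (u t) (y t) :=
    fun t _ => hP.dist_triangle
  have heq := (Finset.sum_eq_sum_iff_of_le hle).mp h.symm
  intro t ht
  have h0 : P.dist (x t) (y t) = 0 := by
    rw [hx t ht, hy t ht, SimpleGraph.dist_self]
  have := (heq t (by simp)).symm
  rw [h0] at this
  have h1 : P.dist (x t) (u t) = 0 := by omega
  have := (hP.dist_eq_zero_iff).mp h1
  rw [← this, hx t ht]

/-- the image of a layer under an automorphism is closed under mixes. -/
lemma image_layer_mix_closed (hP : P.Connected) (φ : boxProdPow P k ≃g boxProdPow P k)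
    {i : Fin k} {a : Fin k → V} {x y : Fin k → V}
    (hx : x ∈ φ '' layer i a) (hy : y ∈ φ '' layer i a) (T : Finset (Fin k)) :
    mix T x y ∈ φ '' layer i a := by
  obtain ⟨p, hp, rfl⟩ := hx
  obtain ⟨q, hq, rfl⟩ := hy
  set u := φ.symm (mix T (φ p) (φ q)) with hu
  have humem : u ∈ layer i a := by
    refine layer_geodesic hP hp hq ?_
    have h1 : (boxProdPow P k).dist p u = (boxProdPow P k).dist (φ p) (mix T (φ p) (φ q)) := by
      rw [hu, ← iso_dist_eq φ p (φ.symm (mix T (φ p) (φ q)))]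
      simp
    have h2 : (boxProdPow P k).dist u q = (boxProdPow P k).dist (mix T (φ p) (φ q)) (φ q) := by
      rw [hu, ← iso_dist_eq φ (φ.symm (mix T (φ p) (φ q))) q]
      simp
    rw [h1, h2, ← iso_dist_eq φ p q]
    exact dist_mix hP T (φ p) (φ q)
  exact ⟨u, humem, by simp [hu]⟩

/-- a nonempty mix-closed set is the product of its projections. -/
lemma mixClosed_eq_pi {S : Set (Fin k → V)} (hne : S.Nonempty)
    (hmix : ∀ x ∈ S, ∀ y ∈ S, ∀ T : Finset (Fin k), mix T x y ∈ S) :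
    ∀ z : Fin k → V, (∀ t, z t ∈ (fun w : Fin k → V => w t) '' S) → z ∈ S := by
  intro z hz
  have key : ∀ T : Finset (Fin k), ∃ w ∈ S, ∀ t ∈ T, w t = z t := by
    intro T
    induction T using Finset.induction_on with
    | empty => exact ⟨hne.choose, hne.choose_spec, by simp⟩
    | insert _ _ ha ih =>
      rename_i b T'
      obtain ⟨w, hwS, hw⟩ := ih
      obtain ⟨sb, hsbS, hsb⟩ := hz b
      refine ⟨mix {b} sb w, hmix sb hsbS w hwS {b}, ?_⟩
      intro t ht
      rcases eq_or_ne t b with rfl | htb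
      · simpa [mix] using hsb
      · have : t ∈ T' := by
          rcases Finset.mem_insert.mp ht with h | h
          · exact absurd h htb
          · exact h
        simpa [mix, htb] using hw t this
  obtain ⟨w, hwS, hw⟩ := key Finset.univ
  have : w = z := funext fun t => hw t (by simp)
  exact this ▸ hwS

/-! ### Induced subgraph isomorphisms -/

def layerIso (P : SimpleGraph V) (i : Fin k) (a : Fin k → V) :
    P ≃g (boxProdPow P k).induce (layer i a) where
  toFun v := ⟨Function.update a i v, update_mem_layer v⟩
  invFun x := x.1 i
  left_inv v := Function.update_self i v a
  right_inv := by
    rintro ⟨x, hx⟩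
    refine Subtype.ext (funext fun t => ?_)
    rcases eq_or_ne t i with rfl | ht
    · simp
    · exact (Function.update_of_ne ht _ a).trans (hx t ht).symm
  map_rel_iff' := by
    intro u v
    show (boxProdPow P k).Adj (Function.update a i u) (Function.update a i v) ↔ P.Adj u v
    constructor
    · rintro ⟨j, hj, he⟩
      rcases eq_or_ne j i with rfl | hji
      · simpa using hj
      · rw [Function.update_of_ne hji, Function.update_of_ne hji] at hj
        exact absurd hj (P.irrefl)
    · intro h
      exact ⟨i, by simpa using h, fun t ht => by
        rw [Function.update_of_ne ht, Function.update_of_ne ht]⟩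

def isoInduceImage {α β : Type} {G : SimpleGraph α} {H : SimpleGraph β} (f : G ≃g H)
    (s : Set α) : G.induce s ≃g H.induce (f '' s) where
  toFun x := ⟨f x.1, ⟨x.1, x.2, rfl⟩⟩
  invFun y := ⟨f.symm y.1, by
    obtain ⟨p, hp, he⟩ := y.2
    have : f.symm y.1 = p := by rw [← he]; simp
    exact this ▸ hp⟩
  left_inv x := Subtype.ext (by simp)
  right_inv y := Subtype.ext (by simp)
  map_rel_iff' := by
    intro u v
    show H.Adj (f u.1) (f v.1) ↔ _
    exact f.map_adj_iff

def piInduceIso (P : SimpleGraph V) {S : Set (Fin k → V)} {C : Fin k → Set V}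
    (hC : ∀ z, z ∈ S ↔ ∀ t, z t ∈ C t) :
    (boxProdPow P k).induce S ≃g boxProdFamily (fun t => P.induce (C t)) where
  toFun z := fun t => ⟨z.1 t, (hC z.1).mp z.2 t⟩
  invFun f := ⟨fun t => (f t).1, (hC _).mpr fun t => (f t).2⟩
  left_inv z := Subtype.ext rfl
  right_inv f := funext fun t => Subtype.ext rfl
  map_rel_iff' := by
    intro z z'
    constructor
    · rintro ⟨j, hj, he⟩
      exact ⟨j, hj, fun t ht => congrArg Subtype.val (he t ht)⟩
    · rintro ⟨j, hj, he⟩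
      exact ⟨j, hj, fun t ht => Subtype.ext (he t ht)⟩

/-! ### Primeness for families -/

def famSuccIso {k : ℕ} {W : Fin (k + 1) → Type} (Q : ∀ i, SimpleGraph (W i)) :
    boxProdFamily Q ≃g (Q 0).boxProd (boxProdFamily fun i : Fin k => Q i.succ) where
  toEquiv := (Fin.consEquiv W).symm
  map_rel_iff' := by
    intro u v
    show ((Q 0).boxProd (boxProdFamily fun i : Fin k => Q i.succ)).Adj (u 0, fun i : Fin k => u i.succ) (v 0, fun i : Fin k => v i.succ) ↔ _
    rw [SimpleGraph.boxProd_adj]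
    constructor
    · rintro (⟨ha, he⟩ | ⟨⟨j, hj, hrest⟩, he⟩)
      · refine ⟨0, ha, fun t ht => ?_⟩
        have : t = (t.pred ht).succ := (Fin.succ_pred t ht).symm
        rw [this]
        exact congrFun he (t.pred ht)
      · refine ⟨j.succ, hj, fun t ht => ?_⟩
        rcases Fin.eq_zero_or_eq_succ t with rfl | ⟨m, rfl⟩
        · exact he
        · exact hrest m (fun hm => ht (by rw [hm]))
    · rintro ⟨j, hj, he⟩
      rcases Fin.eq_zero_or_eq_succ j with rfl | ⟨m, rfl⟩
      · exact Or.inl ⟨hj, funext fun i => he i.succ (Fin.succ_ne_zero i)⟩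
      · refine Or.inr ⟨⟨m, hj, fun i hi => he i.succ (fun hc => hi (Fin.succ_injective _ hc))⟩,
          he 0 (Fin.succ_ne_zero m).symm⟩

def boxProdTrivialLeft {α β : Type} {G : SimpleGraph α} {H : SimpleGraph β}
    (a0 : α) (ha0 : ∀ b, b = a0) : G.boxProd H ≃g H where
  toFun p := p.2
  invFun y := (a0, y)
  left_inv p := by
    obtain ⟨x, y⟩ := p
    simp [ha0 x]
  right_inv y := rfl
  map_rel_iff' := by
    intro p q
    show H.Adj p.2 q.2 ↔ (G.boxProd H).Adj p q
    rw [SimpleGraph.boxProd_adj]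
    constructor
    · intro h
      exact Or.inr ⟨h, (ha0 p.1).trans (ha0 q.1).symm⟩
    · rintro (⟨hG, -⟩ | ⟨h, -⟩)
      · rw [ha0 p.1, ha0 q.1] at hG
        exact absurd hG G.irrefl
      · exact h

lemma prime_family {V : Type} [Fintype V] {P : SimpleGraph V} (hP : P.IsPrime) :
    ∀ (k : ℕ) (W : Fin k → Type) (_ : ∀ i, Fintype (W i)) (Q : ∀ i, SimpleGraph (W i)),
      (P ≃g boxProdFamily Q) → ∃ j, ∀ i, i ≠ j → Fintype.card (W i) = 1 := by
  intro k
  induction k with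
  | zero =>
    intro W inst Q e
    exfalso
    have h1 : Fintype.card V = 1 := by
      rw [Fintype.card_congr e.toEquiv]
      simp
    have := hP.2.1
    omega
  | succ k ih =>
    intro W inst Q e
    have hne : Nonempty V := Fintype.card_pos_iff.mp (by have := hP.2.1; omega)
    obtain ⟨v0⟩ := hne
    have hneW : ∀ i, Nonempty (W i) := fun i => ⟨e v0 i⟩
    let e2 : P ≃g (Q 0).boxProd (boxProdFamily fun i : Fin k => Q i.succ) :=
      e.trans (famSuccIso Q)
    rcases hP.2.2 (W 0) (∀ i : Fin k, W i.succ) (Q 0) _ ⟨e2⟩ with h0 | htail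
    · obtain ⟨a0, ha0⟩ := Fintype.card_eq_one_iff.mp h0
      let e3 : P ≃g boxProdFamily (fun i : Fin k => Q i.succ) :=
        e2.trans (boxProdTrivialLeft a0 ha0)
      obtain ⟨j, hj⟩ := ih (fun i => W i.succ) (fun i => inferInstance) (fun i => Q i.succ) e3
      refine ⟨j.succ, fun i hi => ?_⟩
      rcases Fin.eq_zero_or_eq_succ i with rfl | ⟨m, rfl⟩
      · exact h0
      · exact hj m (fun hm => hi (by rw [hm]))
    · refine ⟨0, fun i hi => ?_⟩
      rcases Fin.eq_zero_or_eq_succ i with rfl | ⟨m, rfl⟩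
      · exact absurd rfl hi
      · have hprod : ∏ i : Fin k, Fintype.card (W i.succ) = 1 := by
          rw [← Fintype.card_pi]; exact htail
        have hdvd : Fintype.card (W m.succ) ∣ 1 :=
          hprod ▸ Finset.dvd_prod_of_mem (fun i : Fin k => Fintype.card (W i.succ)) (Finset.mem_univ m)
        exact Nat.dvd_one.mp hdvd

lemma update_injective' (a : Fin k → V) (i : Fin k) :
    Function.Injective (fun v => Function.update a i v) := by
  intro u v h
  have := congrFun h i
  simpa using this

lemma ncard_layer (j : Fin k) (b : Fin k → V) : (layer j b).ncard = Nat.card V := by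
  rw [layer_eq_update_image, Set.ncard_image_of_injective _ (update_injective' b j),
    Set.ncard_univ]

variable [Fintype V]

lemma image_layer (hP : P.IsPrime) (φ : boxProdPow P k ≃g boxProdPow P k)
    (i : Fin k) (a : Fin k → V) :
    ∃ j, φ '' layer i a = layer j (φ a) := by
  classical
  have hconn := hP.1
  set S := φ '' layer i a with hSdef
  set C : Fin k → Set V := fun t => (fun w : Fin k → V => w t) '' S with hCdef
  have hCiff : ∀ z, z ∈ S ↔ ∀ t, z t ∈ C t := by
    intro z
    constructor
    · intro hz t; exact ⟨z, hz, rfl⟩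
    · intro hz
      exact mixClosed_eq_pi (S := S) ⟨φ a, ⟨a, self_mem_layer, rfl⟩⟩
        (fun x hx y hy T => image_layer_mix_closed hconn φ hx hy T) z hz
  haveI : ∀ t, Fintype (C t) := fun t => Fintype.ofFinite _
  let eIso : P ≃g boxProdFamily (fun t => P.induce (C t)) :=
    ((layerIso P i a).trans (isoInduceImage φ (layer i a))).trans (piInduceIso P hCiff)
  obtain ⟨j, hj⟩ := prime_family hP _ _ (fun t => inferInstance) _ eIso
  refine ⟨j, ?_⟩
  have hφa : φ a ∈ S := ⟨a, self_mem_layer, rfl⟩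
  have hsub : S ⊆ layer j (φ a) := by
    intro z hz t ht
    obtain ⟨c, hc⟩ := Fintype.card_eq_one_iff.mp (hj t ht)
    have h1 := hc ⟨z t, ⟨z, hz, rfl⟩⟩
    have h2 := hc ⟨φ a t, ⟨φ a, hφa, rfl⟩⟩
    have := h1.trans h2.symm
    exact Subtype.ext_iff.mp this
  refine Set.eq_of_subset_of_ncard_le hsub ?_ (Set.toFinite _)
  have hS : S.ncard = Nat.card V := by
    rw [hSdef, Set.ncard_image_of_injective _ φ.injective, ncard_layer]
  rw [ncard_layer, hS]

noncomputable def dir (hP : P.IsPrime) (φ : boxProdPow P k ≃g boxProdPow P k)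
    (a : Fin k → V) (i : Fin k) : Fin k :=
  Classical.choose (image_layer hP φ i a)

lemma dir_spec (hP : P.IsPrime) (φ : boxProdPow P k ≃g boxProdPow P k)
    (a : Fin k → V) (i : Fin k) :
    φ '' layer i a = layer (dir hP φ a i) (φ a) :=
  Classical.choose_spec (image_layer hP φ i a)

lemma nontrivial_of_prime (hP : P.IsPrime) : Nontrivial V :=
  Fintype.one_lt_card_iff_nontrivial.mp (by have := hP.2.1; omega)

lemma dir_injective (hP : P.IsPrime) (φ : boxProdPow P k ≃g boxProdPow P k)
    (a : Fin k → V) : Function.Injective (dir hP φ a) := by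
  haveI := nontrivial_of_prime hP
  intro i i' h
  have h1 : φ '' layer i a = φ '' layer i' a := by
    rw [dir_spec hP φ a i, dir_spec hP φ a i', h]
  have h2 : layer i a = layer i' a := Set.image_injective.mpr φ.injective h1
  exact layer_dir_unique h2

/-- along an edge in direction `m`, the images differ exactly in direction `dir _ _ x m`. -/
lemma dir_step (hP : P.IsPrime) (φ : boxProdPow P k ≃g boxProdPow P k)
    {x x' : Fin k → V} {m : Fin k} (hadj : (boxProdPow P k).Adj x x')
    (hm : ∀ t, t ≠ m → x t = x' t) :
    (∀ s, s ≠ dir hP φ x m → φ x s = φ x' s) ∧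
      φ x (dir hP φ x m) ≠ φ x' (dir hP φ x m) := by
  have hx' : x' ∈ layer m x := fun t ht => (hm t ht).symm
  have himg : φ x' ∈ layer (dir hP φ x m) (φ x) := by
    rw [← dir_spec hP φ x m]
    exact ⟨x', hx', rfl⟩
  have hne : φ x ≠ φ x' := fun hc => (boxProdPow P k).irrefl (φ.injective hc ▸ hadj)
  refine ⟨fun s hs => (himg s hs).symm, fun hc => hne ?_⟩
  funext s
  rcases eq_or_ne s (dir hP φ x m) with rfl | hs
  · exact hc
  · exact (himg s hs).symm

lemma dir_constant_adj (hP : P.IsPrime) (φ : boxProdPow P k ≃g boxProdPow P k)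
    {x x' : Fin k → V} (h : (boxProdPow P k).Adj x x') :
    dir hP φ x = dir hP φ x' := by
  haveI := nontrivial_of_prime hP
  obtain ⟨m, hm, hoth⟩ := h
  have hadj : (boxProdPow P k).Adj x x' := ⟨m, hm, hoth⟩
  -- first: direction m agrees
  have hdm : dir hP φ x m = dir hP φ x' m := by
    have hx' : layer m x' = layer m x :=
      layer_eq_layer_of_mem (fun t ht => (hoth t ht).symm)
    have h1 : layer (dir hP φ x m) (φ x) = layer (dir hP φ x' m) (φ x') := by
      rw [← dir_spec hP φ x m, ← dir_spec hP φ x' m, hx']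
    exact layer_dir_unique h1
  set c := dir hP φ x m with hc
  obtain ⟨hstep, hstepne⟩ := dir_step hP φ hadj hoth
  funext i
  rcases eq_or_ne i m with rfl | him
  · exact hdm
  -- main case
  set j := dir hP φ x i with hj
  set j' := dir hP φ x' i with hj'
  show j = j'
  by_contra hjj'
  have hjc : j ≠ c := fun hh => him (dir_injective hP φ x hh)
  have hj'c : j' ≠ c := fun hh => him (dir_injective hP φ x' (hh.trans hdm))
  obtain ⟨w, hw⟩ := exists_ne (φ x j)
  have hxx : Function.update (φ x) j w ∈ layer j (φ x) := update_mem_layer w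
  rw [← dir_spec hP φ x i] at hxx
  obtain ⟨p, hp, hpe⟩ := hxx
  -- p' : the neighbour of p across the m-edge
  set p' := Function.update p m (x' m) with hp'def
  have hpadj : (boxProdPow P k).Adj p p' := by
    rw [hp'def]
    refine ⟨m, ?_, fun t ht => (Function.update_of_ne ht _ p).symm⟩
    rw [Function.update_self, hp m (fun hh => him hh.symm)]
    exact hm
  have hp'mem : p' ∈ layer i x' := by
    intro t ht
    rcases eq_or_ne t m with rfl | htm
    · simp [hp'def]
    · rw [hp'def, Function.update_of_ne htm, hp t ht, hoth t htm]
  have hφp' : φ p' ∈ layer j' (φ x') := by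
    rw [← dir_spec hP φ x' i]
    exact ⟨p', hp'mem, rfl⟩
  obtain ⟨d, hd, hoth2⟩ := φ.map_adj_iff.mpr hpadj
  have hdc : d = c := by
    by_contra hdc
    have h1 : φ p c = φ p' c := hoth2 c (Ne.symm hdc)
    have h2 : φ p c = φ x c := by
      rw [hpe]; exact Function.update_of_ne (fun hh => hjc hh.symm) _ _
    have h3 : φ p' c = φ x' c := hφp' c (Ne.symm hj'c)
    exact hstepne (by rw [← h2, h1, h3])
  have h4 : φ p j = φ p' j := hoth2 j (by rw [hdc]; exact hjc)
  have h5 : φ p j = w := by rw [hpe]; exact Function.update_self j w (φ x)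
  have h6 : φ p' j = φ x' j := hφp' j (fun hh => hjj' hh)
  have h7 : φ x' j = φ x j := (hstep j hjc).symm
  exact hw (by rw [← h5, h4, h6, h7])

lemma dir_constant (hP : P.IsPrime) (φ : boxProdPow P k ≃g boxProdPow P k)
    (x y : Fin k → V) : dir hP φ x = dir hP φ y := by
  obtain ⟨w⟩ := (pow_connected (k := k) hP.1) x y
  induction w with
  | nil => rfl
  | cons h p ih => exact (dir_constant_adj hP φ h).trans ih

lemma walk_coord (hP : P.IsPrime) (φ : boxProdPow P k ≃g boxProdPow P k)
    (i : Fin k) {u v : V} (wp : P.Walk u v) :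
    ∀ (x : Fin k → V) (a : Fin k), a ≠ i → x a = u →
      φ x (dir hP φ x i) = φ (Function.update x a v) (dir hP φ x i) := by
  induction wp with
  | nil =>
    intro x a ha hx
    rw [← hx, Function.update_eq_self]
  | cons hadj p ih =>
    rename_i u' z v'
    intro x a ha hx
    set x₁ := Function.update x a z with hx₁
    have hadj1 : (boxProdPow P k).Adj x x₁ := by
      rw [hx₁]
      refine ⟨a, ?_, fun t ht => (Function.update_of_ne ht _ x).symm⟩
      rw [Function.update_self, hx]
      exact hadj
    have hstep := dir_step hP φ hadj1 (fun t ht => (Function.update_of_ne ht _ x).symm)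
    have h1 : φ x (dir hP φ x i) = φ x₁ (dir hP φ x i) :=
      hstep.1 _ (fun hh => ha (dir_injective hP φ x hh).symm)
    have hdd : dir hP φ x = dir hP φ x₁ := dir_constant_adj hP φ hadj1
    have h2 := ih x₁ a ha (by rw [hx₁, Function.update_self])
    calc φ x (dir hP φ x i) = φ x₁ (dir hP φ x i) := h1
      _ = φ x₁ (dir hP φ x₁ i) := by rw [congrFun hdd i]
      _ = φ (Function.update x₁ a v') (dir hP φ x₁ i) := h2
      _ = φ (Function.update x a v') (dir hP φ x i) := by
          rw [hx₁, Function.update_idem, ← congrFun hdd i]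

lemma coord_dep (hP : P.IsPrime) (φ : boxProdPow P k ≃g boxProdPow P k) (i : Fin k) :
    ∀ (s : Finset (Fin k)), i ∉ s → ∀ x x' : Fin k → V, (∀ t ∉ s, x t = x' t) →
      φ x (dir hP φ x i) = φ x' (dir hP φ x' i) := by
  intro s
  induction s using Finset.induction_on with
  | empty =>
    intro _ x x' h
    have : x = x' := funext fun t => h t (by simp)
    rw [this]
  | insert _ _ ha ih =>
    rename_i a s'
    intro hi x x' h
    have hai : a ≠ i := fun hh => hi (hh ▸ Finset.mem_insert_self a s')
    obtain ⟨wp⟩ := hP.1.preconnected (x a) (x' a)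
    have h1 := walk_coord hP φ i wp x a hai rfl
    have h3 : φ (Function.update x a (x' a)) (dir hP φ (Function.update x a (x' a)) i)
        = φ x' (dir hP φ x' i) := by
      refine ih (fun hh => hi (Finset.mem_insert_of_mem hh)) _ x' (fun t ht => ?_)
      rcases eq_or_ne t a with rfl | hta
      · rw [Function.update_self]
      · rw [Function.update_of_ne hta]
        exact h t (by simp [ht, hta])
    calc φ x (dir hP φ x i) = φ (Function.update x a (x' a)) (dir hP φ x i) := h1
      _ = φ (Function.update x a (x' a)) (dir hP φ (Function.update x a (x' a)) i) := by
          rw [congrFun (dir_constant hP φ x (Function.update x a (x' a))) i]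
      _ = φ x' (dir hP φ x' i) := h3

lemma coord_eq (hP : P.IsPrime) (φ : boxProdPow P k ≃g boxProdPow P k) {i : Fin k}
    {x x' : Fin k → V} (h : x i = x' i) :
    φ x (dir hP φ x i) = φ x' (dir hP φ x' i) := by
  classical
  refine coord_dep hP φ i (Finset.univ.erase i) (by simp) x x' (fun t ht => ?_)
  have : t = i := by
    by_contra hc
    exact ht (Finset.mem_erase.mpr ⟨hc, Finset.mem_univ t⟩)
  rw [this, h]

lemma exists_decomp (hP : P.IsPrime) (φ : boxProdPow P k ≃g boxProdPow P k) :
    ∃ (π : Equiv.Perm (Fin k)) (ψ : Fin k → (P ≃g P)),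
      ∀ (x : Fin k → V) (i : Fin k), φ x (π i) = (ψ i) (x i) := by
  classical
  haveI : Nonempty V := hP.1.nonempty
  set b : Fin k → V := Classical.arbitrary _ with hb
  have hbij : Function.Bijective (dir hP φ b) :=
    Finite.injective_iff_bijective.mp (dir_injective hP φ b)
  set π : Equiv.Perm (Fin k) := Equiv.ofBijective _ hbij with hπ
  have hπa : ∀ i, π i = dir hP φ b i := fun i => rfl
  set f : Fin k → V → V := fun i v => φ (Function.update b i v) (π i) with hf
  have hfval : ∀ (x : Fin k → V) (i : Fin k), φ x (π i) = f i (x i) := by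
    intro x i
    have h := coord_eq hP φ (i := i) (x := x) (x' := Function.update b i (x i))
      (by rw [Function.update_self])
    have e1 : dir hP φ x i = π i := by
      rw [hπa, congrFun (dir_constant hP φ x b) i]
    have e2 : dir hP φ (Function.update b i (x i)) i = π i := by
      rw [hπa, congrFun (dir_constant hP φ (Function.update b i (x i)) b) i]
    rw [e1, e2] at h
    exact h
  have hinj : ∀ i, Function.Injective (f i) := by
    intro i s t hst
    have hall : φ (Function.update b i s) = φ (Function.update b i t) := by
      funext j
      obtain ⟨i', rfl⟩ := π.surjective j
      rcases eq_or_ne i' i with rfl | hne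
      · exact hst
      · rw [hfval (Function.update b i s) i', hfval (Function.update b i t) i']
        rw [Function.update_of_ne hne, Function.update_of_ne hne]
    have h2 := φ.injective hall
    have h3 := congrFun h2 i
    rwa [Function.update_self, Function.update_self] at h3
  have hsurj : ∀ i, Function.Surjective (f i) := by
    intro i v
    refine ⟨φ.symm (Function.update (φ b) (π i) v) i, ?_⟩
    have h1 : φ (φ.symm (Function.update (φ b) (π i) v)) = Function.update (φ b) (π i) v := by
      simp
    rw [← hfval (φ.symm (Function.update (φ b) (π i) v)) i, h1, Function.update_self]
  have hadj : ∀ i u v, P.Adj u v ↔ P.Adj (f i u) (f i v) := by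
    intro i u v
    constructor
    · intro h
      have hx : (boxProdPow P k).Adj (Function.update b i u) (Function.update b i v) :=
        ⟨i, by simpa using h, fun t ht => by
          rw [Function.update_of_ne ht, Function.update_of_ne ht]⟩
      obtain ⟨j₀, hj₀, hoth⟩ := φ.map_adj_iff.mpr hx
      have hoffeq : ∀ i', i' ≠ i →
          φ (Function.update b i u) (π i') = φ (Function.update b i v) (π i') := by
        intro i' hne
        rw [hfval, hfval, hf]
        simp only []
        rw [Function.update_of_ne hne, Function.update_of_ne hne]
      have hne_at : φ (Function.update b i u) (π i) ≠ φ (Function.update b i v) (π i) := by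
        intro hc
        have hall : φ (Function.update b i u) = φ (Function.update b i v) := by
          funext j
          obtain ⟨i', rfl⟩ := π.surjective j
          rcases eq_or_ne i' i with rfl | hne
          exacts [hc, hoffeq i' hne]
        have h2 := congrFun (φ.injective hall) i
        rw [Function.update_self, Function.update_self] at h2
        exact P.irrefl (h2 ▸ h)
      have hji : j₀ = π i := by
        by_contra hj
        exact hne_at (hoth (π i) (fun hh => hj hh.symm))
      rw [hji] at hj₀
      exact hj₀
    · intro h
      have hGadj : (boxProdPow P k).Adj (φ (Function.update b i u)) (φ (Function.update b i v)) := by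
        refine ⟨π i, h, fun t ht => ?_⟩
        obtain ⟨i', rfl⟩ := π.surjective t
        have hne : i' ≠ i := fun hh => ht (by rw [hh])
        rw [hfval, hfval, hf]
        simp only []
        rw [Function.update_of_ne hne, Function.update_of_ne hne]
      obtain ⟨j₀, hj₀, hoth⟩ := φ.map_adj_iff.mp hGadj
      have hji : j₀ = i := by
        by_contra hj
        rw [Function.update_of_ne hj, Function.update_of_ne hj] at hj₀
        exact P.irrefl hj₀
      rw [hji, Function.update_self, Function.update_self] at hj₀
      exact hj₀
  refine ⟨π, fun i => ⟨Equiv.ofBijective (f i) ⟨hinj i, hsurj i⟩, ?_⟩, fun x i => hfval x i⟩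
  intro u v
  exact (hadj i u v).symm

/-- the wreath-type parametrization of automorphisms. -/
def wreathMap (P : SimpleGraph V) (k : ℕ)
    (p : Equiv.Perm (Fin k) × (Fin k → (P ≃g P))) :
    boxProdPow P k ≃g boxProdPow P k where
  toEquiv := (Equiv.arrowCongr p.1.symm (Equiv.refl V)).trans
    (Equiv.piCongrRight fun j => (p.2 j).toEquiv)
  map_rel_iff' := by
    intro x y
    show (boxProdPow P k).Adj (fun j => p.2 j (x (p.1 j))) (fun j => p.2 j (y (p.1 j))) ↔ _
    constructor
    · rintro ⟨j, hj, hoth⟩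
      refine ⟨p.1 j, (p.2 j).map_adj_iff.mp hj, fun t ht => ?_⟩
      have ht' : p.1.symm t ≠ j := fun hh => ht (by rw [← hh, Equiv.apply_symm_apply])
      have h2 := hoth (p.1.symm t) ht'
      simp only [Equiv.apply_symm_apply] at h2
      exact (p.2 (p.1.symm t)).injective h2
    · rintro ⟨j, hj, hoth⟩
      refine ⟨p.1.symm j, ?_, fun t ht => ?_⟩
      · simp only [Equiv.apply_symm_apply]
        exact (p.2 (p.1.symm j)).map_adj_iff.mpr hj
      · have hne : p.1 t ≠ j := fun hh => ht (by rw [← hh, Equiv.symm_apply_apply])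
        simp only []
        rw [hoth (p.1 t) hne]

lemma wreathMap_apply (p : Equiv.Perm (Fin k) × (Fin k → (P ≃g P))) (x : Fin k → V)
    (j : Fin k) : wreathMap P k p x j = p.2 j (x (p.1 j)) := rfl

lemma wreathMap_bijective (hP : P.IsPrime) :
    Function.Bijective (wreathMap P k) := by
  classical
  haveI := nontrivial_of_prime hP
  constructor
  · rintro ⟨π, ψ⟩ ⟨π', ψ'⟩ h
    have hval : ∀ (x : Fin k → V) (j : Fin k), ψ j (x (π j)) = ψ' j (x (π' j)) := by
      intro x j
      have := congrArg (fun (e : boxProdPow P k ≃g boxProdPow P k) => e x j) h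
      exact this
    obtain ⟨u, v, huv⟩ := exists_pair_ne V
    have hππ' : π = π' := by
      refine Equiv.ext fun j => ?_
      by_contra hne
      have hne' : π' j ≠ π j := fun hh => hne (hh.symm)
      have h1 := hval (Function.update (fun _ => v) (π j) u) j
      have h2 := hval (fun _ => v) j
      rw [Function.update_self, Function.update_of_ne hne'] at h1
      rw [← h2] at h1
      exact huv ((ψ j).injective h1)
    subst hππ'
    exact congrArg (Prod.mk π) (funext fun j => DFunLike.ext _ _ fun w => hval (fun _ => w) j)
  · intro φ
    obtain ⟨π, ψ, hdec⟩ := exists_decomp hP φ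
    refine ⟨(π.symm, fun j => ψ (π.symm j)), ?_⟩
    have : ∀ x : Fin k → V, wreathMap P k (π.symm, fun j => ψ (π.symm j)) x = φ x := by
      intro x
      funext j
      rw [wreathMap_apply]
      show ψ (π.symm j) (x (π.symm j)) = φ x j
      rw [← hdec x (π.symm j), Equiv.apply_symm_apply]
    exact DFunLike.ext _ _ this

end Sab

/-- (Sabidussi) For a prime graph `P` and `k ≥ 1`, the automorphism group of the
`k`-fold box product `P^{□k}` has cardinality `k! ⬝ |Aut(P)|^k`. -/
theorem card_aut_boxProdPow {V : Type} [Fintype V] (P : SimpleGraph V)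
    (hP : P.IsPrime) (k : ℕ) (hk : 0 < k) :
    Nat.card (boxProdPow P k ≃g boxProdPow P k) =
      k.factorial * Nat.card (P ≃g P) ^ k := by
  classical
  have hcard := Nat.card_eq_of_bijective _ (Sab.wreathMap_bijective (k := k) hP)
  rw [← hcard, Nat.card_prod, Nat.card_fun]
  congr 1
  · rw [Nat.card_eq_fintype_card, Fintype.card_perm, Fintype.card_fin]
  · rw [Nat.card_eq_fintype_card (α := Fin k), Fintype.card_fin]
end

section
/- Let P be a prime graph with n vertices and let k be a positive integer. Then the number of simple graphs on the fixed vertex set {1,2,…,n^k} that are isomorphic to the k-fold box product P^{□k} equals (n^k)! / (k! · |Aut(P)|^k). -/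
open SimpleGraph

namespace BoxAux
set_option linter.unusedSectionVars false
open scoped Classical

open Function Finset

variable {V : Type} [Fintype V] {P : SimpleGraph V} {k : ℕ}

lemma bp_adj {x y : Fin k → V} :
    (boxProdPow P k).Adj x y ↔ ∃ j, P.Adj (x j) (y j) ∧ ∀ i, i ≠ j → x i = y i :=
  Iff.rfl

/-- The coordinate of an edge is the unique coordinate where endpoints differ. -/
lemma coord_unique {x y : Fin k → V} {j : Fin k} (h : ∀ i, i ≠ j → x i = y i)
    (hne : x ≠ y) : ∀ l, x l ≠ y l ↔ l = j := by
  intro l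
  constructor
  · intro hl; by_contra hlj; exact hl (h l hlj)
  · rintro rfl
    intro hl
    apply hne
    funext s
    by_cases hs : s = l
    · exact hs ▸ hl
    · exact h s hs

/-- In a "Hamming-like" 4-cycle, opposite edges change the same coordinate. -/
lemma hamming_square {p q r s : Fin k → V} {c1 c2 c3 c4 : Fin k}
    (hpq : p ≠ q) (h1 : ∀ z, z ≠ c1 → p z = q z)
    (hqr : q ≠ r) (h2 : ∀ z, z ≠ c2 → q z = r z)
    (hrs : r ≠ s) (h3 : ∀ z, z ≠ c3 → r z = s z)
    (hsp : s ≠ p) (h4 : ∀ z, z ≠ c4 → s z = p z)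
    (hpr : p ≠ r) (hqs : q ≠ s) : c1 = c3 := by
  have d1 : p c1 ≠ q c1 := by
    intro h
    refine hpq (funext fun z => ?_)
    by_cases hz : z = c1
    · exact hz ▸ h
    · exact h1 z hz
  have d2 : q c2 ≠ r c2 := by
    intro h
    refine hqr (funext fun z => ?_)
    by_cases hz : z = c2
    · exact hz ▸ h
    · exact h2 z hz
  have d3 : r c3 ≠ s c3 := by
    intro h
    refine hrs (funext fun z => ?_)
    by_cases hz : z = c3
    · exact hz ▸ h
    · exact h3 z hz
  have d4 : s c4 ≠ p c4 := by
    intro h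
    refine hsp (funext fun z => ?_)
    by_cases hz : z = c4
    · exact hz ▸ h
    · exact h4 z hz
  by_contra hne
  by_cases h12 : c1 = c2
  · -- p and r agree off c1, differ at c1
    subst h12
    have hpr1 : p c1 ≠ r c1 := by
      intro h
      exact hpr (funext fun z => by
        by_cases hz : z = c1
        · exact hz ▸ h
        · exact (h1 z hz).trans (h2 z hz))
    have hc14 : c1 = c4 := by
      by_contra hc14
      exact hpr1 ((h3 c1 hne).trans (h4 c1 hc14)).symm
    -- now c3 ≠ c1 = c4, contradiction at coordinate c3
    apply d3
    have e1 : s c3 = p c3 := h4 c3 (fun h => hne (hc14.trans h.symm))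
    have e2 : p c3 = q c3 := h1 c3 (Ne.symm hne)
    have e3 : q c3 = r c3 := h2 c3 (Ne.symm hne)
    rw [← e3, ← e2, ← e1]
  · have hpr2 : p c2 ≠ r c2 := fun h => d2 ((h1 c2 (Ne.symm h12)).symm.trans h)
    have hpr1 : p c1 ≠ r c1 := fun h => d1 (h.trans (h2 c1 h12).symm)
    have hdiff : ∀ z, p z ≠ r z → z = c3 ∨ z = c4 := by
      intro z hz
      by_contra hc
      push_neg at hc
      exact hz ((h4 z hc.2).symm.trans (h3 z hc.1).symm)
    have hc14 : c1 = c4 := (hdiff c1 hpr1).resolve_left hne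
    have hc23 : c2 = c3 := by
      rcases hdiff c2 hpr2 with h | h
      · exact h
      · exact absurd (h.trans hc14.symm) (Ne.symm h12)
    apply hqs
    funext z
    by_cases hz1 : z = c1
    · subst hz1
      exact (h2 _ h12).trans (h3 _ hne)
    · by_cases hz2 : z = c2
      · subst hz2
        exact ((h1 _ (Ne.symm h12)).symm).trans ((h4 _ (fun h => h12 (hc14.trans h.symm))).symm)
      · exact ((h1 z hz1).symm).trans ((h4 z (fun h => hz1 (h.trans hc14.symm))).symm)


lemma adj_update {x : Fin k → V} {l : Fin k} {b : V} (h : P.Adj (x l) b) :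
    (boxProdPow P k).Adj x (Function.update x l b) := by
  refine ⟨l, ?_, fun i hi => (Function.update_of_ne hi b x).symm⟩
  rwa [Function.update_self]

lemma lift_walk {a b : V} (p : P.Walk a b) :
    ∀ (x : Fin k → V) (l : Fin k), x l = a →
    ∃ w : (boxProdPow P k).Walk x (Function.update x l b),
      w.length = p.length ∧ ∀ z ∈ w.support, ∀ s, s ≠ l → z s = x s := by
  induction p with
  | nil =>
    intro x l hx
    subst hx
    refine ⟨Walk.nil.copy rfl (Function.update_eq_self l x).symm, by simp, ?_⟩
    intro z hz s _
    rw [Walk.support_copy, Walk.support_nil] at hz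
    simp only [List.mem_singleton] at hz
    rw [hz]
  | @cons c c' d h q ih =>
    intro x l hx
    have hadj : (boxProdPow P k).Adj x (Function.update x l c') := adj_update (hx ▸ h)
    obtain ⟨w', hlen, hsupp⟩ := ih (Function.update x l c') l (Function.update_self l c' x)
    have hupd : Function.update (Function.update x l c') l d = Function.update x l d :=
      Function.update_idem c' d x
    refine ⟨Walk.cons hadj (w'.copy rfl hupd), by simp [hlen], ?_⟩
    intro z hz s hs
    rw [Walk.support_cons] at hz
    rcases List.mem_cons.mp hz with hz | hz
    · rw [hz]
    · rw [Walk.support_copy] at hz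
      exact (hsupp z hz s hs).trans (Function.update_of_ne hs c' x)

lemma exists_walk_mix (hPc : P.Connected) :
    ∀ (m : ℕ) (x y : Fin k → V), (Finset.univ.filter fun l => x l ≠ y l).card ≤ m →
    ∃ w : (boxProdPow P k).Walk x y,
      w.length = ∑ l, P.dist (x l) (y l) ∧
      ∀ z ∈ w.support, ∀ s, x s = y s → z s = x s := by
  intro m
  induction m with
  | zero =>
    intro x y hcard
    have hxy : x = y := by
      funext s
      by_contra hs
      have : s ∈ Finset.univ.filter fun l => x l ≠ y l := by
        simp [hs]
      have := Finset.card_pos.mpr ⟨s, this⟩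
      omega
    subst hxy
    refine ⟨Walk.nil, ?_, ?_⟩
    · rw [Finset.sum_eq_zero fun l _ => SimpleGraph.dist_self]
      simp
    · intro z hz s _
      rw [Walk.support_nil] at hz
      simp only [List.mem_singleton] at hz
      rw [hz]
  | succ m ih =>
    intro x y hcard
    by_cases hxy : x = y
    · exact ih x y (by subst hxy; simp)
    · have : ∃ l, x l ≠ y l := by
        by_contra hc
        push_neg at hc
        exact hxy (funext hc)
      obtain ⟨l, hl⟩ := this
      obtain ⟨p, hp⟩ := hPc.exists_walk_length_eq_dist (x l) (y l)
      set x' := Function.update x l (y l) with hx'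
      obtain ⟨w1, hlen1, hsupp1⟩ := lift_walk p x l rfl
      have hx'l : x' l = y l := Function.update_self l (y l) x
      have hx's : ∀ s, s ≠ l → x' s = x s := fun s hs => Function.update_of_ne hs (y l) x
      have hsub : (Finset.univ.filter fun s => x' s ≠ y s) ⊆
          (Finset.univ.filter fun s => x s ≠ y s).erase l := by
        intro s hsmem
        rw [Finset.mem_filter] at hsmem
        have hsl : s ≠ l := by
          intro h
          exact hsmem.2 (h ▸ hx'l)
        rw [Finset.mem_erase, Finset.mem_filter]
        exact ⟨hsl, Finset.mem_univ s, (hx's s hsl) ▸ hsmem.2⟩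
      have hmem : l ∈ Finset.univ.filter fun s => x s ≠ y s := by simp [hl]
      have hcard' : (Finset.univ.filter fun s => x' s ≠ y s).card ≤ m := by
        have h1 := Finset.card_le_card hsub
        rw [Finset.card_erase_of_mem hmem] at h1
        omega
      obtain ⟨w2, hlen2, hsupp2⟩ := ih x' y hcard'
      refine ⟨w1.append w2, ?_, ?_⟩
      · rw [Walk.length_append, hlen1, hlen2, hp]
        have hsum : ∑ s, P.dist (x' s) (y s) = ∑ s ∈ Finset.univ.erase l, P.dist (x s) (y s) := by
          rw [← Finset.add_sum_erase Finset.univ _ (Finset.mem_univ l), hx'l,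
            SimpleGraph.dist_self, zero_add]
          exact Finset.sum_congr rfl fun s hs => by rw [hx's s (Finset.mem_erase.mp hs).1]
        rw [hsum]
        exact Finset.add_sum_erase Finset.univ (fun s => P.dist (x s) (y s)) (Finset.mem_univ l)
      · intro z hz s hs
        have hsl : s ≠ l := fun h => hl (h ▸ hs)
        rcases (Walk.mem_support_append_iff w1 w2).mp hz with hz | hz
        · exact hsupp1 z hz s hsl
        · exact (hsupp2 z hz s ((hx's s hsl).trans hs)).trans (hx's s hsl)

lemma reachable_bp (hPc : P.Connected) (x y : Fin k → V) : (boxProdPow P k).Reachable x y := by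
  obtain ⟨w, -, -⟩ := exists_walk_mix hPc (Finset.univ.filter fun l => x l ≠ y l).card x y le_rfl
  exact ⟨w⟩

lemma connected_bp (hPc : P.Connected) : (boxProdPow P k).Connected := by
  have : Nonempty V := hPc.nonempty
  exact ⟨fun x y => reachable_bp hPc x y⟩

lemma sum_dist_le (hPc : P.Connected) {x y : Fin k → V} (w : (boxProdPow P k).Walk x y) :
    ∑ l, P.dist (x l) (y l) ≤ w.length := by
  induction w with
  | nil => simp [SimpleGraph.dist_self]
  | @cons x x' y h q ih =>
    obtain ⟨j, hadj, heq⟩ := h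
    have hj : P.dist (x j) (y j) ≤ P.dist (x' j) (y j) + 1 := by
      have h1 : P.dist (x j) (x' j) ≤ 1 := by
        have := SimpleGraph.dist_le hadj.toWalk
        simpa using this
      calc P.dist (x j) (y j) ≤ P.dist (x j) (x' j) + P.dist (x' j) (y j) := hPc.dist_triangle
        _ ≤ 1 + P.dist (x' j) (y j) := by omega
        _ = P.dist (x' j) (y j) + 1 := by omega
    have hsum : ∑ l, P.dist (x l) (y l) ≤ (∑ l, P.dist (x' l) (y l)) + 1 := by
      rw [← Finset.add_sum_erase Finset.univ _ (Finset.mem_univ j),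
          ← Finset.add_sum_erase Finset.univ (fun l => P.dist (x' l) (y l)) (Finset.mem_univ j)]
      have herase : ∑ l ∈ Finset.univ.erase j, P.dist (x l) (y l)
          = ∑ l ∈ Finset.univ.erase j, P.dist (x' l) (y l) :=
        Finset.sum_congr rfl fun s hs => by rw [heq s (Finset.mem_erase.mp hs).1]
      omega
    exact hsum.trans (Nat.add_le_add_right ih 1)

lemma dist_bp (hPc : P.Connected) (x y : Fin k → V) :
    (boxProdPow P k).dist x y = ∑ l, P.dist (x l) (y l) := by
  refine le_antisymm ?_ ?_
  · obtain ⟨w, hw, -⟩ := exists_walk_mix hPc (Finset.univ.filter fun l => x l ≠ y l).card x y le_rfl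
    exact hw ▸ SimpleGraph.dist_le w
  · obtain ⟨p, hp⟩ := (reachable_bp hPc x y).exists_walk_length_eq_dist
    exact hp ▸ sum_dist_le hPc p


lemma dist_map (hPc : P.Connected) (φ : (boxProdPow P k) ≃g (boxProdPow P k))
    (x y : Fin k → V) : (boxProdPow P k).dist (φ x) (φ y) = (boxProdPow P k).dist x y := by
  have key : ∀ (ψ : (boxProdPow P k) ≃g (boxProdPow P k)) (x y : Fin k → V),
      (boxProdPow P k).dist (ψ x) (ψ y) ≤ (boxProdPow P k).dist x y := by
    intro ψ x y
    obtain ⟨p, hp⟩ := (reachable_bp hPc x y).exists_walk_length_eq_dist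
    calc (boxProdPow P k).dist (ψ x) (ψ y) ≤ (p.map ψ.toHom).length := SimpleGraph.dist_le _
    _ = p.length := Walk.length_map _ _
    _ = _ := hp
  refine le_antisymm (key φ x y) ?_
  have := key φ.symm (φ x) (φ y)
  simpa using this

lemma between_layer (hPc : P.Connected) {v z : Fin k → V} {i : Fin k} {a b : V}
    (hd : (boxProdPow P k).dist (Function.update v i a) z
        + (boxProdPow P k).dist z (Function.update v i b)
        = (boxProdPow P k).dist (Function.update v i a) (Function.update v i b)) :
    ∀ l, l ≠ i → z l = v l := by
  set A := Function.update v i a with hA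
  set B := Function.update v i b with hB
  rw [dist_bp hPc, dist_bp hPc, dist_bp hPc, ← Finset.sum_add_distrib] at hd
  have hle : ∀ l : Fin k, P.dist (A l) (B l) ≤ P.dist (A l) (z l) + P.dist (z l) (B l) :=
    fun l => hPc.dist_triangle
  intro l hl
  have hAB : P.dist (A l) (B l) = 0 := by
    rw [hA, hB, Function.update_of_ne hl, Function.update_of_ne hl, SimpleGraph.dist_self]
  have hzero : P.dist (A l) (z l) + P.dist (z l) (B l) = 0 := by
    by_contra hc
    have hlt : P.dist (A l) (B l) < P.dist (A l) (z l) + P.dist (z l) (B l) := by omega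
    have := Finset.sum_lt_sum (fun s _ => hle s) ⟨l, Finset.mem_univ l, hlt⟩
    omega
  have : P.dist (A l) (z l) = 0 := by omega
  have hz : z l = A l := ((hPc.dist_eq_zero_iff).mp this).symm
  rw [hz, hA, Function.update_of_ne hl]

lemma mix_in_image (hPc : P.Connected) (φ : (boxProdPow P k) ≃g (boxProdPow P k))
    (v : Fin k → V) (i j : Fin k) (a b : V) :
    ∃ c : V, φ (Function.update v i c)
      = Function.update (φ (Function.update v i a)) j ((φ (Function.update v i b)) j) := by
  set A := Function.update v i a with hA
  set B := Function.update v i b with hB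
  set m := Function.update (φ A) j ((φ B) j) with hm
  have hd : (boxProdPow P k).dist (φ A) m + (boxProdPow P k).dist m (φ B)
      = (boxProdPow P k).dist (φ A) (φ B) := by
    rw [dist_bp hPc, dist_bp hPc, dist_bp hPc, ← Finset.sum_add_distrib]
    refine Finset.sum_congr rfl fun l _ => ?_
    by_cases hlj : l = j
    · subst hlj
      rw [hm, Function.update_self, SimpleGraph.dist_self, SimpleGraph.dist_comm]
      omega
    · rw [hm, Function.update_of_ne hlj, SimpleGraph.dist_self]
      omega
  set z := φ.symm m with hz
  have hmz : φ z = m := φ.apply_symm_apply m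
  have hd2 : (boxProdPow P k).dist A z + (boxProdPow P k).dist z B
      = (boxProdPow P k).dist A B := by
    have e1 : (boxProdPow P k).dist A z = (boxProdPow P k).dist (φ A) m := by
      rw [← hmz, dist_map hPc]
    have e2 : (boxProdPow P k).dist z B = (boxProdPow P k).dist m (φ B) := by
      rw [← hmz, dist_map hPc]
    have e3 : (boxProdPow P k).dist A B = (boxProdPow P k).dist (φ A) (φ B) :=
      (dist_map hPc φ A B).symm
    rw [e1, e2, e3, hd]
  have hlayer : ∀ l, l ≠ i → z l = v l := between_layer hPc hd2
  refine ⟨z i, ?_⟩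
  have : Function.update v i (z i) = z := by
    funext s
    by_cases hs : s = i
    · subst hs; rw [Function.update_self]
    · rw [Function.update_of_ne hs]
      exact (hlayer s hs).symm
  rw [this, hmz]


lemma layer_dichotomy (hP : P.IsPrime) (φ : (boxProdPow P k) ≃g (boxProdPow P k))
    (v : Fin k → V) (i j : Fin k) :
    (∀ a b : V, φ (Function.update v i a) j = φ (Function.update v i b) j) ∨
    (∀ a b : V, ∀ l, l ≠ j → φ (Function.update v i a) l = φ (Function.update v i b) l) := by
  obtain ⟨hPc, h2, hprime⟩ := hP
  set c0 : V := φ v j with hc0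
  set S : Set V := Set.range fun a => φ (Function.update v i a) j with hS
  set T : Set (Fin k → V) :=
    Set.range fun a => Function.update (φ (Function.update v i a)) j c0 with hT
  haveI : Fintype ↥S := Fintype.ofFinite _
  haveI : Fintype ↥T := Fintype.ofFinite _
  set f : V → ↥S × ↥T := fun a =>
    (⟨φ (Function.update v i a) j, ⟨a, rfl⟩⟩,
     ⟨Function.update (φ (Function.update v i a)) j c0, ⟨a, rfl⟩⟩) with hf
  -- from component equalities, the full images agree
  have hfull : ∀ a b : V, φ (Function.update v i a) j = φ (Function.update v i b) j →
      Function.update (φ (Function.update v i a)) j c0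
        = Function.update (φ (Function.update v i b)) j c0 →
      φ (Function.update v i a) = φ (Function.update v i b) := by
    intro a b h1 h2'
    funext l
    by_cases hl : l = j
    · subst hl; exact h1
    · have := congrFun h2' l
      rwa [Function.update_of_ne hl, Function.update_of_ne hl] at this
  have hinj : Function.Injective f := by
    intro a b hab
    have h1 := congrArg (fun p => (p.1 : V)) hab
    have h2' := congrArg (fun p => (p.2 : Fin k → V)) hab
    simp only [hf] at h1 h2'
    have himg := hfull a b h1 h2'
    have := φ.toEquiv.injective himg
    have := congrFun this i
    rwa [Function.update_self, Function.update_self] at this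
  have hsurj : Function.Surjective f := by
    rintro ⟨⟨s, a, ha⟩, ⟨t, b, hb⟩⟩
    obtain ⟨c, hc⟩ := mix_in_image hPc φ v i j b a
    refine ⟨c, ?_⟩
    refine Prod.ext (Subtype.ext ?_) (Subtype.ext ?_)
    · show φ (Function.update v i c) j = s
      rw [hc, Function.update_self]
      exact ha
    · show Function.update (φ (Function.update v i c)) j c0 = t
      rw [hc, Function.update_idem]
      exact hb
  -- the adjacency correspondence
  have hGadj : ∀ a b : V, (boxProdPow P k).Adj (φ (Function.update v i a))
      (φ (Function.update v i b)) ↔ P.Adj a b := by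
    intro a b
    rw [SimpleGraph.Iso.map_adj_iff]
    constructor
    · rintro ⟨l0, hadj0, heq0⟩
      by_cases hl0 : l0 = i
      · subst hl0
        rwa [Function.update_self, Function.update_self] at hadj0
      · exfalso
        have h1 : Function.update v i a l0 = v l0 := Function.update_of_ne hl0 a v
        have h2' : Function.update v i b l0 = v l0 := Function.update_of_ne hl0 b v
        exact hadj0.ne (h1.trans h2'.symm)
    · intro hab
      refine ⟨i, ?_, fun l hl => by
        rw [Function.update_of_ne hl, Function.update_of_ne hl]⟩
      rwa [Function.update_self, Function.update_self]
  have hadj : ∀ a b : V,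
      ((P.induce S).boxProd ((boxProdPow P k).induce T)).Adj (f a) (f b) ↔ P.Adj a b := by
    intro a b
    rw [SimpleGraph.boxProd_adj]
    constructor
    · rintro (⟨h1, h2'⟩ | ⟨h1, h2'⟩)
      · -- adjacency in coordinate j, rest equal
        have h2v : Function.update (φ (Function.update v i a)) j c0
            = Function.update (φ (Function.update v i b)) j c0 := congrArg Subtype.val h2'
        have : (boxProdPow P k).Adj (φ (Function.update v i a)) (φ (Function.update v i b)) := by
          refine ⟨j, h1, fun l hl => ?_⟩
          have := congrFun h2v l
          rwa [Function.update_of_ne hl, Function.update_of_ne hl] at this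
        exact (hGadj a b).mp this
      · -- adjacency in the rest, j-coordinates equal
        have h1' : (boxProdPow P k).Adj (Function.update (φ (Function.update v i a)) j c0)
            (Function.update (φ (Function.update v i b)) j c0) := h1
        obtain ⟨l0, hadj0, heq0⟩ := h1'
        have hl0 : l0 ≠ j := by
          intro h
          subst h
          rw [Function.update_self, Function.update_self] at hadj0
          exact hadj0.ne rfl
        have : (boxProdPow P k).Adj (φ (Function.update v i a)) (φ (Function.update v i b)) := by
          refine ⟨l0, ?_, fun l hl => ?_⟩
          · rwa [Function.update_of_ne hl0, Function.update_of_ne hl0] at hadj0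
          · by_cases hlj : l = j
            · subst hlj; exact congrArg Subtype.val h2'
            · have := heq0 l hl
              rwa [Function.update_of_ne hlj, Function.update_of_ne hlj] at this
        exact (hGadj a b).mp this
    · intro hab
      obtain ⟨l0, hadj0, heq0⟩ := (hGadj a b).mpr hab
      by_cases hl0 : l0 = j
      · left
        constructor
        · show P.Adj (φ (Function.update v i a) j) (φ (Function.update v i b) j)
          rw [← hl0]
          exact hadj0
        · apply Subtype.ext
          show Function.update (φ (Function.update v i a)) j c0
              = Function.update (φ (Function.update v i b)) j c0
          funext l
          by_cases hlj : l = j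
          · subst hlj; rw [Function.update_self, Function.update_self]
          · rw [Function.update_of_ne hlj, Function.update_of_ne hlj]
            exact heq0 l (fun h => hlj (h.trans hl0))
      · right
        constructor
        · show (boxProdPow P k).Adj (Function.update (φ (Function.update v i a)) j c0)
              (Function.update (φ (Function.update v i b)) j c0)
          refine ⟨l0, ?_, fun l hl => ?_⟩
          · show P.Adj (Function.update (φ (Function.update v i a)) j c0 l0)
                (Function.update (φ (Function.update v i b)) j c0 l0)
            rw [Function.update_of_ne hl0, Function.update_of_ne hl0]
            exact hadj0
          · by_cases hlj : l = j
            · subst hlj; rw [Function.update_self, Function.update_self]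
            · rw [Function.update_of_ne hlj, Function.update_of_ne hlj]
              exact heq0 l hl
        · apply Subtype.ext
          show φ (Function.update v i a) j = φ (Function.update v i b) j
          exact heq0 j fun h => hl0 h.symm
  let θ : P ≃g (P.induce S).boxProd ((boxProdPow P k).induce T) :=
    { toEquiv := Equiv.ofBijective f ⟨hinj, hsurj⟩
      map_rel_iff' := fun {a b} => hadj a b }
  rcases hprime ↥S ↥T (P.induce S) ((boxProdPow P k).induce T) ⟨θ⟩ with h | h
  · left
    intro a b
    haveI : Subsingleton ↥S := Fintype.card_le_one_iff_subsingleton.mp h.le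
    have h' := Subsingleton.elim (⟨φ (Function.update v i a) j, ⟨a, rfl⟩⟩ : ↥S)
      ⟨φ (Function.update v i b) j, ⟨b, rfl⟩⟩
    have hv : φ (Function.update v i a) j = φ (Function.update v i b) j :=
      congrArg Subtype.val h'
    exact hv
  · right
    intro a b l hl
    haveI : Subsingleton ↥T := Fintype.card_le_one_iff_subsingleton.mp h.le
    have h' := Subsingleton.elim
      (⟨Function.update (φ (Function.update v i a)) j c0, ⟨a, rfl⟩⟩ : ↥T)
      ⟨Function.update (φ (Function.update v i b)) j c0, ⟨b, rfl⟩⟩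
    have hv : Function.update (φ (Function.update v i a)) j c0
        = Function.update (φ (Function.update v i b)) j c0 := congrArg Subtype.val h'
    have hl' := congrFun hv l
    rwa [Function.update_of_ne hl, Function.update_of_ne hl] at hl'


lemma pair_ne (h2 : 2 ≤ Fintype.card V) : ∃ a b : V, a ≠ b := by
  haveI : Nontrivial V := Fintype.one_lt_card_iff_nontrivial.mp (by omega)
  obtain ⟨a, b, h⟩ := exists_pair_ne V
  exact ⟨a, b, h⟩

lemma exists_adj (hPc : P.Connected) (h2 : 2 ≤ Fintype.card V) (c : V) : ∃ a, P.Adj c a := by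
  haveI : Nontrivial V := Fintype.one_lt_card_iff_nontrivial.mp (by omega)
  obtain ⟨d, hd⟩ := exists_ne c
  obtain ⟨p⟩ := hPc.preconnected c d
  cases p with
  | nil => exact absurd rfl (Ne.symm hd)
  | cons h q => exact ⟨_, h⟩

lemma exists_target (hP : P.IsPrime) (φ : (boxProdPow P k) ≃g (boxProdPow P k))
    (v : Fin k → V) (i : Fin k) :
    ∃ j : Fin k, ∀ a b : V, ∀ l, l ≠ j →
      φ (Function.update v i a) l = φ (Function.update v i b) l := by
  obtain ⟨a0, b0, hab⟩ := pair_ne hP.2.1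
  by_contra hc
  push_neg at hc
  have hconst : ∀ (j : Fin k) (a b : V),
      φ (Function.update v i a) j = φ (Function.update v i b) j := by
    intro j a b
    rcases layer_dichotomy hP φ v i j with h | h
    · exact h a b
    · obtain ⟨a', b', l, hl, hne⟩ := hc j
      exact absurd (h a' b' l hl) hne
  have heq : φ (Function.update v i a0) = φ (Function.update v i b0) :=
    funext fun j => hconst j a0 b0
  have := φ.toEquiv.injective heq
  have hi := congrFun this i
  rw [Function.update_self, Function.update_self] at hi
  exact hab hi

noncomputable def tgt (hP : P.IsPrime) (φ : (boxProdPow P k) ≃g (boxProdPow P k))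
    (v : Fin k → V) (i : Fin k) : Fin k :=
  Classical.choose (exists_target hP φ v i)

lemma tgt_spec (hP : P.IsPrime) (φ : (boxProdPow P k) ≃g (boxProdPow P k))
    (v : Fin k → V) (i : Fin k) :
    ∀ a b : V, ∀ l, l ≠ tgt hP φ v i →
      φ (Function.update v i a) l = φ (Function.update v i b) l :=
  Classical.choose_spec (exists_target hP φ v i)

lemma tgt_unique (hP : P.IsPrime) (φ : (boxProdPow P k) ≃g (boxProdPow P k))
    (v : Fin k → V) (i : Fin k) {j' : Fin k}
    (h : ∀ a b : V, ∀ l, l ≠ j' → φ (Function.update v i a) l = φ (Function.update v i b) l) :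
    j' = tgt hP φ v i := by
  by_contra hne
  obtain ⟨a0, b0, hab⟩ := pair_ne hP.2.1
  have hall : ∀ l, φ (Function.update v i a0) l = φ (Function.update v i b0) l := by
    intro l
    by_cases hl : l = j'
    · subst hl
      exact tgt_spec hP φ v i a0 b0 _ hne
    · exact h a0 b0 l hl
  have heq : φ (Function.update v i a0) = φ (Function.update v i b0) := funext hall
  have := φ.toEquiv.injective heq
  have hi := congrFun this i
  rw [Function.update_self, Function.update_self] at hi
  exact hab hi

lemma update_eq_update {v w : Fin k → V} {i : Fin k} (hw : ∀ l, l ≠ i → w l = v l) (a : V) :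
    Function.update w i a = Function.update v i a := by
  funext s
  by_cases hs : s = i
  · subst hs; rw [Function.update_self, Function.update_self]
  · rw [Function.update_of_ne hs, Function.update_of_ne hs]
    exact hw s hs

lemma tgt_layer (hP : P.IsPrime) (φ : (boxProdPow P k) ≃g (boxProdPow P k))
    {v w : Fin k → V} {i : Fin k} (hw : ∀ l, l ≠ i → w l = v l) :
    tgt hP φ w i = tgt hP φ v i := by
  refine tgt_unique hP φ v i ?_
  intro a b l hl
  rw [← update_eq_update hw a, ← update_eq_update hw b]
  exact tgt_spec hP φ w i a b l hl

lemma edge_image (hP : P.IsPrime) (φ : (boxProdPow P k) ≃g (boxProdPow P k))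
    (v : Fin k → V) (i : Fin k) {a b : V} (hab : P.Adj a b) :
    P.Adj (φ (Function.update v i a) (tgt hP φ v i)) (φ (Function.update v i b) (tgt hP φ v i)) := by
  have hG : (boxProdPow P k).Adj (φ (Function.update v i a)) (φ (Function.update v i b)) := by
    rw [SimpleGraph.Iso.map_adj_iff]
    refine ⟨i, ?_, fun l hl => by rw [Function.update_of_ne hl, Function.update_of_ne hl]⟩
    rwa [Function.update_self, Function.update_self]
  obtain ⟨l0, hadj0, heq0⟩ := hG
  have hl0 : l0 = tgt hP φ v i := by
    by_contra h
    exact hadj0.ne (tgt_spec hP φ v i a b l0 h)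
  rwa [← hl0]

lemma tgt_const_adj (hP : P.IsPrime) (φ : (boxProdPow P k) ≃g (boxProdPow P k))
    {v w : Fin k → V} (hvw : (boxProdPow P k).Adj v w) (i : Fin k) :
    tgt hP φ v i = tgt hP φ w i := by
  obtain ⟨l, hadjl, heql⟩ := hvw
  by_cases hli : l = i
  · subst hli
    exact (tgt_layer hP φ fun s hs => (heql s hs).symm).symm
  · -- square argument
    obtain ⟨a, ha⟩ := exists_adj hP.1 hP.2.1 (v i)
    set u := Function.update v i a with hu
    set u' := Function.update w i a with hu'
    have hwv : ∀ s, s ≠ l → w s = v s := fun s hs => (heql s hs).symm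
    have hwivi : w i = v i := hwv i fun h => hli h.symm
    have hvu : (boxProdPow P k).Adj v u := by
      refine ⟨i, ?_, fun s hs => (Function.update_of_ne hs a v).symm⟩
      rw [hu, Function.update_self]
      exact ha
    have huu' : (boxProdPow P k).Adj u u' := by
      refine ⟨l, ?_, fun s hs => ?_⟩
      · rw [hu, hu', Function.update_of_ne hli, Function.update_of_ne hli]
        exact hadjl
      · by_cases hsi : s = i
        · subst hsi
          rw [hu, hu', Function.update_self, Function.update_self]
        · rw [hu, hu', Function.update_of_ne hsi, Function.update_of_ne hsi]
          exact heql s hs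
    have hu'w : (boxProdPow P k).Adj w u' := by
      refine ⟨i, ?_, fun s hs => (Function.update_of_ne hs a w).symm⟩
      rw [hu', Function.update_self, hwivi]
      exact ha
    -- image edges
    obtain ⟨c2, hadj2, heq2⟩ := φ.map_adj_iff.mpr huu'
    have hvw' : (boxProdPow P k).Adj v w := ⟨l, hadjl, heql⟩
    obtain ⟨c4, hadj4, heq4⟩ := φ.map_adj_iff.mpr hvw'.symm
    have h1 : ∀ z, z ≠ tgt hP φ v i → φ v z = φ u z := by
      intro z hz
      have := tgt_spec hP φ v i (v i) a z hz
      rwa [Function.update_eq_self] at this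
    have h3 : ∀ z, z ≠ tgt hP φ w i → φ u' z = φ w z := by
      intro z hz
      have := tgt_spec hP φ w i a (w i) z hz
      rwa [Function.update_eq_self] at this
    -- distinctness of the four vertices and their images
    have hvine : v i ≠ a := ha.ne
    have hvlwl : v l ≠ w l := hadjl.ne
    have hinj := φ.toEquiv.injective
    have nvu : v ≠ u := fun h => hvine (by rw [h, hu, Function.update_self])
    have nuu' : u ≠ u' := fun h => hvlwl (by
      have := congrFun h l
      rwa [hu, hu', Function.update_of_ne hli, Function.update_of_ne hli] at this)
    have nu'w : u' ≠ w := fun h => hvine (by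
      have := congrFun h i
      rw [hu', Function.update_self, hwivi] at this
      exact this.symm)
    have nwv : w ≠ v := fun h => hvlwl (congrFun h l).symm
    have nvu' : v ≠ u' := fun h => hvlwl (by
      have := congrFun h l
      rwa [hu', Function.update_of_ne hli] at this)
    have nuw : u ≠ w := fun h => hvine (by
      have := congrFun h i
      rw [hu, Function.update_self, hwivi] at this
      exact this.symm)
    exact hamming_square (hinj.ne nvu) h1 (hinj.ne nuu') heq2 (hinj.ne nu'w) h3
      (hinj.ne nwv) heq4 (hinj.ne nvu') (hinj.ne nuw)


lemma edge_offcoord (hP : P.IsPrime) (φ : (boxProdPow P k) ≃g (boxProdPow P k))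
    {x y : Fin k → V} (h : (boxProdPow P k).Adj x y) {i : Fin k}
    (hi : ∀ l, l ≠ i → x l = y l) {m : Fin k} (hm : m ≠ tgt hP φ x i) : φ x m = φ y m := by
  have hx : Function.update x i (x i) = x := Function.update_eq_self i x
  have hy : Function.update x i (y i) = y := by
    funext s
    by_cases hs : s = i
    · subst hs; rw [Function.update_self]
    · rw [Function.update_of_ne hs]
      exact hi s hs
  have := tgt_spec hP φ x i (x i) (y i) m hm
  rwa [hx, hy] at this

lemma tgt_eq (hP : P.IsPrime) (φ : (boxProdPow P k) ≃g (boxProdPow P k))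
    (x y : Fin k → V) (i : Fin k) : tgt hP φ x i = tgt hP φ y i := by
  obtain ⟨w⟩ := reachable_bp hP.1 x y
  induction w with
  | nil => rfl
  | cons h q ih => exact (tgt_const_adj hP φ h i).symm ▸ (tgt_const_adj hP φ h i).trans ih

lemma tgt_surj (hP : P.IsPrime) (φ : (boxProdPow P k) ≃g (boxProdPow P k))
    (v0 : Fin k → V) : Function.Surjective (fun i => tgt hP φ v0 i) := by
  intro m
  by_contra hc
  push_neg at hc
  have hstep : ∀ x y : Fin k → V, (boxProdPow P k).Adj x y → φ x m = φ y m := by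
    intro x y h
    obtain ⟨i, hadj, heq⟩ := h
    refine edge_offcoord hP φ ⟨i, hadj, heq⟩ heq ?_
    intro hmm
    apply hc i
    rw [tgt_eq hP φ v0 x i]
    exact hmm.symm
  have hconst : ∀ x y : Fin k → V, φ x m = φ y m := by
    intro x y
    obtain ⟨w⟩ := reachable_bp hP.1 x y
    induction w with
    | nil => rfl
    | cons h q ih => exact (hstep _ _ h).trans ih
  haveI : Nontrivial V := Fintype.one_lt_card_iff_nontrivial.mp (by have := hP.2.1; omega)
  obtain ⟨b, hb⟩ := exists_ne (φ v0 m)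
  obtain ⟨y0, hy0⟩ := φ.toEquiv.surjective (Function.update (φ v0) m b)
  have hcon := hconst v0 y0
  have hy0m : φ y0 m = b := by
    show (φ.toEquiv y0) m = b
    rw [hy0, Function.update_self]
  rw [hy0m] at hcon
  exact hb hcon.symm

lemma walk_const_coord (hP : P.IsPrime) (φ : (boxProdPow P k) ≃g (boxProdPow P k))
    {m s : Fin k} (v0 : Fin k → V) (hms : tgt hP φ v0 s = m)
    (hinj : ∀ i, i ≠ s → tgt hP φ v0 i ≠ m) :
    ∀ {x y : Fin k → V} (w : (boxProdPow P k).Walk x y),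
      (∀ z ∈ w.support, z s = x s) → φ x m = φ y m := by
  intro x y w
  induction w with
  | nil => intro _; rfl
  | @cons x x1 y h q ih =>
    intro hsupp
    have hx1 : x1 s = x s := by
      refine hsupp x1 ?_
      rw [Walk.support_cons]
      exact List.mem_cons_of_mem _ q.start_mem_support
    obtain ⟨i, hadj, heq⟩ := h
    have his : i ≠ s := by
      intro hh
      subst hh
      exact hadj.ne hx1.symm
    have hstep : φ x m = φ x1 m := by
      refine edge_offcoord hP φ ⟨i, hadj, heq⟩ heq ?_
      rw [tgt_eq hP φ x v0 i]
      exact (hinj i his).symm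
    refine hstep.trans (ih ?_)
    intro z hz
    rw [hx1]
    exact hsupp z (by exact List.mem_cons_of_mem _ hz)

lemma aut_decomp (hP : P.IsPrime) (φ : (boxProdPow P k) ≃g (boxProdPow P k)) :
    ∃ (σ : Equiv.Perm (Fin k)) (α : Fin k → (P ≃g P)),
      ∀ (x : Fin k → V) (m : Fin k), φ x m = (α m) (x (σ.symm m)) := by
  haveI : Nonempty V := hP.1.nonempty
  set v0 : Fin k → V := fun _ => Classical.arbitrary V with hv0
  have hbij : Function.Bijective (fun i => tgt hP φ v0 i) :=
    (Finite.surjective_iff_bijective).mp (tgt_surj hP φ v0)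
  set σ : Equiv.Perm (Fin k) := Equiv.ofBijective _ hbij with hσ
  have hσap : ∀ i, σ i = tgt hP φ v0 i := fun i => rfl
  have key : ∀ (m : Fin k) (x y : Fin k → V), x (σ.symm m) = y (σ.symm m) → φ x m = φ y m := by
    intro m x y hxy
    have hms : tgt hP φ v0 (σ.symm m) = m := ((hσap _).symm).trans (σ.apply_symm_apply m)
    have hinj : ∀ i, i ≠ σ.symm m → tgt hP φ v0 i ≠ m := by
      intro i hi hcon
      exact hi (σ.injective (((hσap i).trans hcon).trans (σ.apply_symm_apply m).symm))
    obtain ⟨w, -, hsupp⟩ := exists_walk_mix hP.1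
      (Finset.univ.filter fun l => x l ≠ y l).card x y le_rfl
    exact walk_const_coord hP φ v0 hms hinj w fun z hz => hsupp z hz (σ.symm m) hxy
  have halpha : ∀ m : Fin k, ∃ αm : P ≃g P, ∀ x : Fin k → V, φ x m = αm (x (σ.symm m)) := by
    intro m
    have hms : tgt hP φ v0 (σ.symm m) = m := ((hσap _).symm).trans (σ.apply_symm_apply m)
    set s := σ.symm m with hs
    set g : V → V := fun b => φ (Function.update v0 s b) m with hg
    have hgx : ∀ x : Fin k → V, φ x m = g (x s) := by
      intro x
      exact key m x (Function.update v0 s (x s)) (Function.update_self s (x s) v0).symm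
    have hginj : Function.Injective g := by
      intro b b' hbb
      have hfull : φ (Function.update v0 s b) = φ (Function.update v0 s b') := by
        funext l
        by_cases hl : l = m
        · subst hl; exact hbb
        · exact tgt_spec hP φ v0 s b b' l (by rw [hms]; exact hl)
      have := φ.toEquiv.injective hfull
      have h2 := congrFun this s
      rwa [Function.update_self, Function.update_self] at h2
    have hgbij : Function.Bijective g := (Finite.injective_iff_bijective).mp hginj
    have hgadj : ∀ b b' : V, P.Adj (g b) (g b') ↔ P.Adj b b' := by
      intro b b'
      constructor
      · intro hadj
        have hGadj : (boxProdPow P k).Adj (φ (Function.update v0 s b))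
            (φ (Function.update v0 s b')) := by
          refine ⟨m, hadj, fun l hl => ?_⟩
          exact tgt_spec hP φ v0 s b b' l (by rw [hms]; exact hl)
        have := φ.map_adj_iff.mp hGadj
        obtain ⟨l0, hadj0, heq0⟩ := this
        have hl0 : l0 = s := by
          by_contra hcon
          have h1 : Function.update v0 s b l0 = v0 l0 := Function.update_of_ne hcon b v0
          have h2 : Function.update v0 s b' l0 = v0 l0 := Function.update_of_ne hcon b' v0
          exact hadj0.ne (h1.trans h2.symm)
        subst hl0
        rwa [Function.update_self, Function.update_self] at hadj0
      · intro hadj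
        have := edge_image hP φ v0 s hadj
        rwa [hms] at this
    refine ⟨{ toEquiv := Equiv.ofBijective g hgbij, map_rel_iff' := fun {b b'} => hgadj b b' }, ?_⟩
    intro x
    exact hgx x
  choose α hα using halpha
  exact ⟨σ, α, fun x m => hα m x⟩


def wreathEquiv (σ : Equiv.Perm (Fin k)) (α : Fin k → (P ≃g P)) :
    (Fin k → V) ≃ (Fin k → V) where
  toFun x := fun m => (α m) (x (σ.symm m))
  invFun y := fun i => (α (σ i)).symm (y (σ i))
  left_inv x := by
    funext i
    show (α (σ i)).symm ((α (σ i)) (x (σ.symm (σ i)))) = x i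
    rw [σ.symm_apply_apply]
    exact (α (σ i)).symm_apply_apply _
  right_inv y := by
    funext m
    show (α m) ((α (σ (σ.symm m))).symm (y (σ (σ.symm m)))) = y m
    have h : σ (σ.symm m) = m := σ.apply_symm_apply m
    rw [show (α (σ (σ.symm m))).symm (y (σ (σ.symm m))) = (α m).symm (y m) by rw [h]]
    exact (α m).apply_symm_apply _

def wreathIso (σ : Equiv.Perm (Fin k)) (α : Fin k → (P ≃g P)) :
    (boxProdPow P k) ≃g (boxProdPow P k) where
  toEquiv := wreathEquiv σ α
  map_rel_iff' := by
    intro x y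
    constructor
    · rintro ⟨j, hadj, heq⟩
      have hadj' : P.Adj ((α j) (x (σ.symm j))) ((α j) (y (σ.symm j))) := hadj
      refine ⟨σ.symm j, (α j).map_rel_iff.mp hadj', fun i hi => ?_⟩
      have hσi : σ i ≠ j := fun h => hi (by rw [← h, σ.symm_apply_apply])
      have h2 : (α (σ i)) (x (σ.symm (σ i))) = (α (σ i)) (y (σ.symm (σ i))) := heq (σ i) hσi
      rw [σ.symm_apply_apply] at h2
      exact (α (σ i)).toEquiv.injective h2
    · rintro ⟨i, hadj, heq⟩
      refine ⟨σ i, ?_, fun m hm => ?_⟩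
      · show P.Adj ((α (σ i)) (x (σ.symm (σ i)))) ((α (σ i)) (y (σ.symm (σ i))))
        rw [σ.symm_apply_apply]
        exact (α (σ i)).map_rel_iff.mpr hadj
      · show (α m) (x (σ.symm m)) = (α m) (y (σ.symm m))
        congr 1
        refine heq (σ.symm m) fun h => hm ?_
        rw [← h, σ.apply_symm_apply]

lemma finite_iso {W : Type} (Q : SimpleGraph W) [Finite W] : Finite (Q ≃g Q) := by
  refine Finite.of_injective (fun f => f.toEquiv) ?_
  rintro ⟨e1, h1⟩ ⟨e2, h2⟩ h
  cases h
  rfl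

lemma card_aut (hP : P.IsPrime) :
    Nat.card ((boxProdPow P k) ≃g (boxProdPow P k))
      = k.factorial * Nat.card (P ≃g P) ^ k := by
  have hΦ : Function.Bijective
      (fun p : Equiv.Perm (Fin k) × (Fin k → (P ≃g P)) => wreathIso p.1 p.2) := by
    constructor
    · rintro ⟨σ, α⟩ ⟨σ', α'⟩ h
      simp only [Prod.mk.injEq]
      have happ : ∀ (x : Fin k → V) (m : Fin k),
          (α m) (x (σ.symm m)) = (α' m) (x (σ'.symm m)) := by
        intro x m
        have h1 := DFunLike.congr_fun h x
        exact congrFun h1 m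
      have hσ : σ = σ' := by
        have hsymm : ∀ m, σ.symm m = σ'.symm m := by
          intro m
          by_contra hne
          obtain ⟨b, b', hbb⟩ := pair_ne hP.2.1
          set x : Fin k → V := fun _ => b with hx
          set x' := Function.update x (σ.symm m) b' with hx'
          have h1 : (α m) (x (σ.symm m)) = (α' m) (x (σ'.symm m)) := happ x m
          have h2 : (α m) (x' (σ.symm m)) = (α' m) (x' (σ'.symm m)) := happ x' m
          have hxeq : x' (σ'.symm m) = x (σ'.symm m) :=
            Function.update_of_ne (fun hh => hne hh.symm) b' x
          rw [hxeq, ← h1] at h2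
          have h3 := (α m).toEquiv.injective h2
          rw [hx', Function.update_self] at h3
          exact hbb (by rw [hx] at h3; exact h3.symm)
        have hs : σ.symm = σ'.symm := Equiv.ext hsymm
        rw [← σ.symm_symm, hs, σ'.symm_symm]
      subst hσ
      refine ⟨rfl, ?_⟩
      funext m
      apply RelIso.ext
      intro b
      exact happ (fun _ => b) m
    · intro φ
      obtain ⟨σ, α, hσα⟩ := aut_decomp hP φ
      refine ⟨(σ, α), ?_⟩
      apply RelIso.ext
      intro x
      funext m
      exact (hσα x m).symm
  haveI : Finite (P ≃g P) := finite_iso P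
  have hcard := Nat.card_congr (Equiv.ofBijective _ hΦ)
  rw [← hcard, Nat.card_prod, Nat.card_fun]
  rw [Nat.card_eq_fintype_card (α := Equiv.Perm (Fin k)), Fintype.card_perm, Fintype.card_fin]
  rw [Nat.card_eq_fintype_card (α := Fin k), Fintype.card_fin]


instance permSMul {β : Type} : SMul (Equiv.Perm β) (SimpleGraph β) :=
  ⟨fun ρ H =>
    { Adj := fun a b => H.Adj (ρ.symm a) (ρ.symm b)
      symm := ⟨fun a b hab => hab.symm⟩
      loopless := ⟨fun a hab => hab.ne rfl⟩ }⟩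

lemma smul_adj {β : Type} (ρ : Equiv.Perm β) (H : SimpleGraph β) (a b : β) :
    (ρ • H).Adj a b ↔ H.Adj (ρ.symm a) (ρ.symm b) := Iff.rfl

instance permMulAction {β : Type} : MulAction (Equiv.Perm β) (SimpleGraph β) where
  one_smul H := by
    ext a b
    show H.Adj ((1 : Equiv.Perm β).symm a) ((1 : Equiv.Perm β).symm b) ↔ H.Adj a b
    exact Iff.rfl
  mul_smul ρ τ H := by
    ext a b
    show H.Adj ((ρ * τ).symm a) ((ρ * τ).symm b) ↔ H.Adj (τ.symm (ρ.symm a)) (τ.symm (ρ.symm b))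
    simp [Equiv.Perm.mul_def]

lemma card_copies {β : Type} [Fintype β] [DecidableEq β] (G0 : SimpleGraph β) :
    Nat.card {H : SimpleGraph β // Nonempty (H ≃g G0)} * Nat.card (G0 ≃g G0)
      = (Fintype.card β).factorial := by
  have horb : ∀ H : SimpleGraph β,
      H ∈ MulAction.orbit (Equiv.Perm β) G0 ↔ Nonempty (H ≃g G0) := by
    intro H
    constructor
    · intro hmem
      obtain ⟨ρ, rfl⟩ := MulAction.mem_orbit_iff.mp hmem
      exact ⟨{ toEquiv := ρ.symm, map_rel_iff' := fun {a b} => Iff.rfl }⟩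
    · rintro ⟨f⟩
      rw [MulAction.mem_orbit_iff]
      refine ⟨(f.toEquiv : Equiv.Perm β)⁻¹, ?_⟩
      ext a b
      show G0.Adj (((f.toEquiv)⁻¹).symm a) (((f.toEquiv)⁻¹).symm b) ↔ H.Adj a b
      have h1 : ((f.toEquiv)⁻¹).symm = f.toEquiv := rfl
      rw [h1]
      exact f.map_adj_iff
  haveI : Finite (MulAction.orbit (Equiv.Perm β) G0) := by
    have : MulAction.orbit (Equiv.Perm β) G0 = Set.range (fun ρ : Equiv.Perm β => ρ • G0) := rfl
    rw [this]
    exact (Set.finite_range _).to_subtype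
  haveI : Fintype (MulAction.orbit (Equiv.Perm β) G0) := Fintype.ofFinite _
  haveI : Fintype (MulAction.stabilizer (Equiv.Perm β) G0) := Fintype.ofFinite _
  have horbstab := MulAction.card_orbit_mul_card_stabilizer_eq_card_group (Equiv.Perm β) G0
  have hstabEq : Nat.card (MulAction.stabilizer (Equiv.Perm β) G0) = Nat.card (G0 ≃g G0) := by
    refine Nat.card_congr ?_
    refine { toFun := fun p => ?_, invFun := fun f => ?_, left_inv := ?_, right_inv := ?_ }
    · refine { toEquiv := (p : Equiv.Perm β), map_rel_iff' := fun {a b} => ?_ }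
      have hρ : (p : Equiv.Perm β) • G0 = G0 := p.2
      have h1 : ((p : Equiv.Perm β) • G0).Adj ((p : Equiv.Perm β) a) ((p : Equiv.Perm β) b)
          ↔ G0.Adj ((p : Equiv.Perm β) a) ((p : Equiv.Perm β) b) := by rw [hρ]
      rw [smul_adj, Equiv.symm_apply_apply, Equiv.symm_apply_apply] at h1
      exact h1.symm
    · refine ⟨f.toEquiv, ?_⟩
      rw [MulAction.mem_stabilizer_iff]
      ext a b
      show G0.Adj (f.toEquiv.symm a) (f.toEquiv.symm b) ↔ G0.Adj a b
      exact f.symm.map_adj_iff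
    · intro p
      exact Subtype.ext rfl
    · intro f
      exact RelIso.ext fun x => rfl
  have horbEq : Nat.card (MulAction.orbit (Equiv.Perm β) G0)
      = Nat.card {H : SimpleGraph β // Nonempty (H ≃g G0)} :=
    Nat.card_congr (Equiv.subtypeEquivRight horb)
  have h1 : Nat.card (MulAction.orbit (Equiv.Perm β) G0)
      * Nat.card (MulAction.stabilizer (Equiv.Perm β) G0)
      = Nat.card (Equiv.Perm β) := by
    rw [Nat.card_eq_fintype_card, Nat.card_eq_fintype_card, Nat.card_eq_fintype_card]
    exact horbstab
  rw [horbEq, hstabEq] at h1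
  rw [h1, Nat.card_eq_fintype_card, Fintype.card_perm]

end BoxAux

open BoxAux in
/-- Let `P` be a prime graph on `n` vertices and `k ≥ 1`. The number of simple
graphs on the fixed vertex set `{1, …, n^k}` isomorphic to the `k`-fold box
product `P^{□k}` equals `(n^k)! / (k! ⬝ |Aut(P)|^k)`. -/
theorem card_labeled_copies_boxProdPow {V : Type} [Fintype V] (P : SimpleGraph V)
    (n : ℕ) (hn : Fintype.card V = n) (hP : P.IsPrime) (k : ℕ) (hk : 0 < k) :
    Nat.card {H : SimpleGraph (Fin (n ^ k)) // Nonempty (H ≃g boxProdPow P k)} =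
      (n ^ k).factorial / (k.factorial * Nat.card (P ≃g P) ^ k) := by
  classical
  subst hn
  haveI : Nonempty V := hP.1.nonempty
  have hcard : Fintype.card (Fin k → V) = Fintype.card V ^ k := by
    rw [Fintype.card_fun, Fintype.card_fin]
  let e : (Fin k → V) ≃ Fin (Fintype.card V ^ k) := Fintype.equivFinOfCardEq hcard
  let G0 : SimpleGraph (Fin (Fintype.card V ^ k)) :=
    { Adj := fun a b => (boxProdPow P k).Adj (e.symm a) (e.symm b)
      symm := ⟨fun a b hab => hab.symm⟩
      loopless := ⟨fun a hab => hab.ne rfl⟩ }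
  have e0 : (boxProdPow P k) ≃g G0 :=
    { toEquiv := e
      map_rel_iff' := fun {a b} => by
        show (boxProdPow P k).Adj (e.symm (e a)) (e.symm (e b)) ↔ _
        rw [e.symm_apply_apply, e.symm_apply_apply] }
  have hiff : ∀ H : SimpleGraph (Fin (Fintype.card V ^ k)),
      Nonempty (H ≃g boxProdPow P k) ↔ Nonempty (H ≃g G0) :=
    fun H => ⟨fun ⟨f⟩ => ⟨f.trans e0⟩, fun ⟨f⟩ => ⟨f.trans e0.symm⟩⟩
  have hsub :
      Nat.card {H : SimpleGraph (Fin (Fintype.card V ^ k)) // Nonempty (H ≃g boxProdPow P k)}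
      = Nat.card {H : SimpleGraph (Fin (Fintype.card V ^ k)) // Nonempty (H ≃g G0)} :=
    Nat.card_congr (Equiv.subtypeEquivRight hiff)
  have hautEq : Nat.card (G0 ≃g G0) = Nat.card ((boxProdPow P k) ≃g (boxProdPow P k)) := by
    refine Nat.card_congr ?_
    refine { toFun := fun f => (e0.trans f).trans e0.symm,
             invFun := fun g => (e0.symm.trans g).trans e0,
             left_inv := ?_, right_inv := ?_ }
    · intro f
      apply RelIso.ext
      intro x
      simp [RelIso.trans_apply]
    · intro g
      apply RelIso.ext
      intro x
      simp [RelIso.trans_apply]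
  have hmain := card_copies G0
  rw [hautEq, card_aut hP, Fintype.card_fin] at hmain
  rw [hsub]
  haveI : Finite (P ≃g P) := finite_iso P
  haveI : Nonempty (P ≃g P) := ⟨RelIso.refl _⟩
  have hpos : 0 < k.factorial * Nat.card (P ≃g P) ^ k :=
    Nat.mul_pos (Nat.factorial_pos k) (pow_pos Nat.card_pos k)
  exact (Nat.div_eq_of_eq_mul_left hpos hmain.symm).symm
end
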